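/- arXiv:1111.0689 — 4 statements merged into one kernel-verified Lean document; each statement's English description precedes it below -/
import Mathlib

section
/- Subset entropy inequality of Yeung and Zhang (Theorem 2): For any L ≥ 1 and any λ = (λ_1,…,λ_L) with all λ_l ≥ 0, there exists a function c_λ : {nonempty subsets of {1,…,L}} → ℝ≥0 such that: (1) for each α ∈ {1,…,L}, the restriction c_λ^{(α)} := {c_λ(U) : U ∈ Ω_L^{(α)}} is an optimal solution to the linear program defining f_α(λ) — that is, it is feasible (c_λ(U) ≥ 0 and ∑_{U ∈ Ω_L^{(α)}, U ∋ l} c_λ(U) ≤ λ_l for every l) and ∑_{U ∈ Ω_L^{(α)}} c_λ(U) = f_α(λ); and (2) for each α ∈ {2,…,L} and any jointly distributed random variables X_1,…,X_L each taking values in a finite set, ∑_{V ∈ Ω_L^{(α−1)}} c_λ(V) H(X_V) ≥ ∑_{U ∈ Ω_L^{(α)}} c_λ(U) H(X_U). -/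
open MeasureTheory ProbabilityTheory Finset



open MeasureTheory ProbabilityTheory

noncomputable def entH {Ω : Type*} [MeasurableSpace Ω] (μ : Measure Ω)
    {S : Type*} [Fintype S] (X : Ω → S) : ℝ :=
  ∑ s : S, Real.negMulLog ((μ (X ⁻¹' {s})).toReal)

noncomputable def condEntH {Ω : Type*} [MeasurableSpace Ω] (μ : Measure Ω)
    {S T : Type*} [Fintype S] [Fintype T] (X : Ω → S) (Y : Ω → T) : ℝ :=
  entH μ (fun ω => (X ω, Y ω)) - entH μ Y

def jointOn {Ω : Type*} {ι : Type*} {S : ι → Type*} (X : ∀ i, Ω → S i) (U : Finset ι) :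
    Ω → ((i : U) → S i) := fun ω i => X i ω

noncomputable def entHset {Ω : Type*} [MeasurableSpace Ω] (μ : Measure Ω)
    {ι : Type*} [DecidableEq ι] {S : ι → Type*} [∀ i, Fintype (S i)]
    (X : ∀ i, Ω → S i) (U : Finset ι) : ℝ :=
  entH μ (jointOn X U)

noncomputable def condEntHset {Ω : Type*} [MeasurableSpace Ω] (μ : Measure Ω)
    {ι : Type*} [DecidableEq ι] {S : ι → Type*} [∀ i, Fintype (S i)]
    (X : ∀ i, Ω → S i) (U A : Finset ι) : ℝ :=
  condEntH μ (jointOn X U) (jointOn X A)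

/-- `Ω_L^{(α)}`: the collection of all `α`-element subsets of the index set. -/
def OmegaL (L α : ℕ) : Finset (Finset (Fin L)) :=
  Finset.powersetCard α (Finset.univ : Finset (Fin L))

/-- `f_α(λ)`: the optimal value of the covering linear program. -/
noncomputable def fLP (L : ℕ) (lam : Fin L → ℝ) (α : ℕ) : ℝ :=
  sSup { x : ℝ | ∃ c : Finset (Fin L) → ℝ,
    (∀ U ∈ OmegaL L α, 0 ≤ c U) ∧
    (∀ l : Fin L, ∑ U ∈ (OmegaL L α).filter (fun U => l ∈ U), c U ≤ lam l) ∧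
    x = ∑ U ∈ OmegaL L α, c U }

/-- `c` is an optimal solution of the linear program defining `f_α(λ)`. -/
def IsOptimal (L : ℕ) (lam : Fin L → ℝ) (α : ℕ) (c : Finset (Fin L) → ℝ) : Prop :=
  (∀ U ∈ OmegaL L α, 0 ≤ c U) ∧
  (∀ l : Fin L, ∑ U ∈ (OmegaL L α).filter (fun U => l ∈ U), c U ≤ lam l) ∧
  ∑ U ∈ OmegaL L α, c U = fLP L lam α



section EntCore

variable {Ωt : Type*} [MeasurableSpace Ωt] (μ : Measure Ωt) [IsProbabilityMeasure μ]

lemma prob_toReal_le_one (s : Set Ωt) : (μ s).toReal ≤ 1 := by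
  have h := prob_le_one (μ := μ) (s := s)
  have := ENNReal.toReal_mono (by norm_num) h
  simpa using this

lemma entH_nonneg {S : Type*} [Fintype S] (X : Ωt → S) : 0 ≤ entH μ X :=
  Finset.sum_nonneg fun s _ =>
    Real.negMulLog_nonneg ENNReal.toReal_nonneg (prob_toReal_le_one μ _)

lemma entH_comp_injective {S T : Type*} [Fintype S] [Fintype T]
    (X : Ωt → S) (f : S → T) (hf : Function.Injective f) :
    entH μ (f ∘ X) = entH μ X := by
  classical
  unfold entH
  symm
  calc ∑ s : S, Real.negMulLog ((μ (X ⁻¹' {s})).toReal)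
      = ∑ s : S, Real.negMulLog ((μ ((f ∘ X) ⁻¹' {f s})).toReal) := by
        apply Finset.sum_congr rfl
        intro s _
        have : (f ∘ X) ⁻¹' {f s} = X ⁻¹' {s} := by
          ext ω; simp [hf.eq_iff]
        rw [this]
    _ = ∑ t ∈ (univ : Finset S).image f,
          Real.negMulLog ((μ ((f ∘ X) ⁻¹' {t})).toReal) :=
        (Finset.sum_image (f := fun t => Real.negMulLog ((μ ((f ∘ X) ⁻¹' {t})).toReal))
          (fun x _ y _ h => hf h)).symm
    _ = ∑ t : T, Real.negMulLog ((μ ((f ∘ X) ⁻¹' {t})).toReal) := by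
        apply Finset.sum_subset (Finset.subset_univ _)
        intro t _ ht
        have : (f ∘ X) ⁻¹' {t} = ∅ := by
          ext ω
          simp only [Set.mem_preimage, Set.mem_singleton_iff, Set.mem_empty_iff_false, iff_false]
          intro h
          exact ht (Finset.mem_image.mpr ⟨X ω, Finset.mem_univ _, h⟩)
        simp [this]

/-- marginalization of the point mass function along a map -/
lemma prob_comp_eq_sum {γ δ : Type*} [Fintype γ] [MeasurableSpace γ] [MeasurableSingletonClass γ]
    [DecidableEq δ]
    (g : Ωt → γ) (hg : Measurable g) (F : γ → δ) (t : δ) :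
    (μ ((F ∘ g) ⁻¹' {t})).toReal
      = ∑ s ∈ univ.filter (fun s => F s = t), (μ (g ⁻¹' {s})).toReal := by
  classical
  have hset : (F ∘ g) ⁻¹' {t} = ⋃ s ∈ univ.filter (fun s => F s = t), g ⁻¹' {s} := by
    ext ω
    simp only [Set.mem_preimage, Function.comp_apply, Set.mem_singleton_iff, Set.mem_iUnion,
      Finset.mem_filter, Finset.mem_univ, true_and]
    constructor
    · intro h; exact ⟨g ω, h, rfl⟩
    · rintro ⟨s, hs, hsr⟩; rw [hsr]; exact hs
  rw [hset, measure_biUnion_finset ?_ ?_, ENNReal.toReal_sum]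
  · intro s _; exact measure_ne_top μ _
  · intro s _ s' _ hne
    apply Disjoint.preimage
    simp [hne]
  · intro s _; exact hg (measurableSet_singleton s)

lemma sum_prob_eq_one {γ : Type*} [Fintype γ] [MeasurableSpace γ] [MeasurableSingletonClass γ]
    (g : Ωt → γ) (hg : Measurable g) :
    ∑ s : γ, (μ (g ⁻¹' {s})).toReal = 1 := by
  classical
  have h := prob_comp_eq_sum μ g hg (fun _ => ()) ()
  have h1 : ((fun _ => ()) ∘ g) ⁻¹' {()} = Set.univ := by
    ext ω; simp
  have h2 : (univ.filter (fun s : γ => (fun _ => ()) s = ())) = univ := by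
    ext s; simp
  rw [h1, h2] at h
  simpa using h.symm

lemma entH_comp_eq {γ δ : Type*} [Fintype γ] [Fintype δ] [MeasurableSpace γ]
    [MeasurableSingletonClass γ] [DecidableEq δ]
    (g : Ωt → γ) (hg : Measurable g) (F : γ → δ) :
    entH μ (F ∘ g) = ∑ s : γ, -((μ (g ⁻¹' {s})).toReal) *
      Real.log (∑ s' ∈ univ.filter (fun s' => F s' = F s), (μ (g ⁻¹' {s'})).toReal) := by
  classical
  unfold entH
  rw [← Finset.sum_fiberwise (univ : Finset γ) F
    (fun s => -((μ (g ⁻¹' {s})).toReal) *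
      Real.log (∑ s' ∈ univ.filter (fun s' => F s' = F s), (μ (g ⁻¹' {s'})).toReal))]
  apply Finset.sum_congr rfl
  intro t _
  rw [prob_comp_eq_sum μ g hg F t]
  have hcg : ∀ i ∈ univ.filter (fun s => F s = t),
      -((μ (g ⁻¹' {i})).toReal) *
        Real.log (∑ s' ∈ univ.filter (fun s' => F s' = F i), (μ (g ⁻¹' {s'})).toReal)
      = -((μ (g ⁻¹' {i})).toReal) *
        Real.log (∑ s' ∈ univ.filter (fun s' => F s' = t), (μ (g ⁻¹' {s'})).toReal) := by
    intro i hi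
    rw [(Finset.mem_filter.mp hi).2]
  rw [Finset.sum_congr rfl hcg, ← Finset.sum_mul, Finset.sum_neg_distrib,
    Real.negMulLog, neg_mul]

end EntCore


section Submod

variable {Ωt : Type*} [MeasurableSpace Ωt] (μ : Measure Ωt) [IsProbabilityMeasure μ]

lemma entH_submodular_aux {A B C : Type*} [Fintype A] [Fintype B] [Fintype C]
    [MeasurableSpace A] [MeasurableSpace B] [MeasurableSpace C]
    [MeasurableSingletonClass A] [MeasurableSingletonClass B] [MeasurableSingletonClass C]
    (Y : Ωt → A) (Z : Ωt → B) (T : Ωt → C)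
    (hY : Measurable Y) (hZ : Measurable Z) (hT : Measurable T) :
    entH μ (fun ω => (Y ω, Z ω, T ω)) + entH μ Z
      ≤ entH μ (fun ω => (Y ω, Z ω)) + entH μ (fun ω => (Z ω, T ω)) := by
  classical
  set g : Ωt → A × B × C := fun ω => (Y ω, Z ω, T ω) with hgdef
  have hg : Measurable g := hY.prodMk (hZ.prodMk hT)
  set q : A × B × C → ℝ := fun s => (μ (g ⁻¹' {s})).toReal with hqdef
  have hq0 : ∀ s, 0 ≤ q s := fun s => ENNReal.toReal_nonneg
  have hqsum : ∑ s, q s = 1 := sum_prob_eq_one μ g hg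
  set m12 : A × B → ℝ := fun t => ∑ s' ∈ univ.filter (fun s' : A × B × C => (s'.1, s'.2.1) = t), q s' with hm12def
  set m23 : B × C → ℝ := fun t => ∑ s' ∈ univ.filter (fun s' : A × B × C => s'.2 = t), q s' with hm23def
  set m2 : B → ℝ := fun t => ∑ s' ∈ univ.filter (fun s' : A × B × C => s'.2.1 = t), q s' with hm2def
  have h12 : entH μ (fun ω => (Y ω, Z ω)) = ∑ s : A × B × C, -(q s) * Real.log (m12 (s.1, s.2.1)) :=
    entH_comp_eq μ g hg (fun s : A × B × C => (s.1, s.2.1))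
  have h23 : entH μ (fun ω => (Z ω, T ω)) = ∑ s : A × B × C, -(q s) * Real.log (m23 s.2) :=
    entH_comp_eq μ g hg (fun s : A × B × C => s.2)
  have h2 : entH μ Z = ∑ s : A × B × C, -(q s) * Real.log (m2 s.2.1) :=
    entH_comp_eq μ g hg (fun s : A × B × C => s.2.1)
  have hgent : entH μ g = ∑ s : A × B × C, -(q s) * Real.log (q s) := by
    unfold entH
    apply Finset.sum_congr rfl
    intro s _
    rw [Real.negMulLog, neg_mul]
  -- pointwise marginal lower bounds
  have hle12 : ∀ s : A × B × C, q s ≤ m12 (s.1, s.2.1) := fun s =>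
    Finset.single_le_sum (fun i _ => hq0 i) (by simp)
  have hle23 : ∀ s : A × B × C, q s ≤ m23 s.2 := fun s =>
    Finset.single_le_sum (fun i _ => hq0 i) (by simp)
  have hle2 : ∀ s : A × B × C, q s ≤ m2 s.2.1 := fun s =>
    Finset.single_le_sum (fun i _ => hq0 i) (by simp)
  have hm12nn : ∀ t, 0 ≤ m12 t := fun t => Finset.sum_nonneg (fun i _ => hq0 i)
  have hm23nn : ∀ t, 0 ≤ m23 t := fun t => Finset.sum_nonneg (fun i _ => hq0 i)
  -- key pointwise inequality
  have key : ∀ s : A × B × C, 0 < q s →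
      q s - m12 (s.1, s.2.1) * m23 s.2 / m2 s.2.1
        ≤ q s * (Real.log (q s) + Real.log (m2 s.2.1)
            - Real.log (m12 (s.1, s.2.1)) - Real.log (m23 s.2)) := by
    intro s hs
    have p12 : 0 < m12 (s.1, s.2.1) := lt_of_lt_of_le hs (hle12 s)
    have p23 : 0 < m23 s.2 := lt_of_lt_of_le hs (hle23 s)
    have p2 : 0 < m2 s.2.1 := lt_of_lt_of_le hs (hle2 s)
    have hlog : Real.log ((m12 (s.1, s.2.1) * m23 s.2) / (q s * m2 s.2.1))
        ≤ (m12 (s.1, s.2.1) * m23 s.2) / (q s * m2 s.2.1) - 1 :=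
      Real.log_le_sub_one_of_pos (by positivity)
    have hexp : Real.log ((m12 (s.1, s.2.1) * m23 s.2) / (q s * m2 s.2.1))
        = Real.log (m12 (s.1, s.2.1)) + Real.log (m23 s.2)
          - (Real.log (q s) + Real.log (m2 s.2.1)) := by
      rw [Real.log_div (by positivity) (by positivity), Real.log_mul p12.ne' p23.ne',
        Real.log_mul hs.ne' p2.ne']
    rw [hexp] at hlog
    have hmul := mul_le_mul_of_nonneg_left hlog hs.le
    have hdiv : q s * ((m12 (s.1, s.2.1) * m23 s.2) / (q s * m2 s.2.1) - 1)
        = m12 (s.1, s.2.1) * m23 s.2 / m2 s.2.1 - q s := by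
      field_simp
    rw [hdiv] at hmul
    nlinarith [hmul]
  -- restrict sums to the support
  have hsupp : ∀ (f : A × B × C → ℝ),
      (∀ s, q s = 0 → f s = 0) →
      ∑ s ∈ univ.filter (fun s => 0 < q s), f s = ∑ s : A × B × C, f s := by
    intro f hf
    apply Finset.sum_subset (Finset.filter_subset _ _)
    intro s _ hs
    have : q s = 0 := le_antisymm (by simpa using hs) (hq0 s)
    exact hf s this
  -- sum of q over support is 1
  have hsum_supp : ∑ s ∈ univ.filter (fun s => 0 < q s), q s = 1 := by
    rw [hsupp (fun s => q s) (fun s h => h)]; exact hqsum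
  -- marginal consistency
  have hmarg12 : ∀ b : B, ∑ a : A, m12 (a, b) = m2 b := by
    intro b
    have hfib := Finset.sum_fiberwise_of_maps_to
      (s := univ.filter (fun s' : A × B × C => s'.2.1 = b))
      (t := (univ : Finset A)) (g := fun s : A × B × C => s.1)
      (fun s _ => Finset.mem_univ _) q
    calc ∑ a : A, m12 (a, b)
        = ∑ a : A, ∑ i ∈ (univ.filter (fun s' : A × B × C => s'.2.1 = b)).filter
            (fun i => i.1 = a), q i := by
          apply Finset.sum_congr rfl
          intro a _
          rw [show (univ.filter (fun s' : A × B × C => s'.2.1 = b)).filter (fun i => i.1 = a)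
              = univ.filter (fun s' : A × B × C => (s'.1, s'.2.1) = (a, b)) from by
            ext s
            simp only [Finset.mem_filter, Finset.mem_univ, true_and, Prod.mk.injEq]
            tauto]
      _ = m2 b := hfib
  have hmarg23 : ∀ b : B, ∑ c : C, m23 (b, c) = m2 b := by
    intro b
    have hfib := Finset.sum_fiberwise_of_maps_to
      (s := univ.filter (fun s' : A × B × C => s'.2.1 = b))
      (t := (univ : Finset C)) (g := fun s : A × B × C => s.2.2)
      (fun s _ => Finset.mem_univ _) q
    calc ∑ c : C, m23 (b, c)
        = ∑ c : C, ∑ i ∈ (univ.filter (fun s' : A × B × C => s'.2.1 = b)).filter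
            (fun i => i.2.2 = c), q i := by
          apply Finset.sum_congr rfl
          intro c _
          rw [show (univ.filter (fun s' : A × B × C => s'.2.1 = b)).filter (fun i => i.2.2 = c)
              = univ.filter (fun s' : A × B × C => s'.2 = (b, c)) from by
            ext s
            simp only [Finset.mem_filter, Finset.mem_univ, true_and, Prod.ext_iff]
            all_goals tauto]
      _ = m2 b := hfib
  have hm2total : ∑ b : B, m2 b = 1 := by
    rw [← hqsum]
    exact Finset.sum_fiberwise (univ : Finset (A × B × C)) (fun s => s.2.1) q
  -- the ratio sum bound
  have hratio : ∑ s ∈ univ.filter (fun s : A × B × C => 0 < q s),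
      m12 (s.1, s.2.1) * m23 s.2 / m2 s.2.1 ≤ 1 := by
    have hsubset : univ.filter (fun s : A × B × C => 0 < q s)
        ⊆ univ.filter (fun s : A × B × C => 0 < m2 s.2.1) := by
      intro s hs
      simp only [Finset.mem_filter, Finset.mem_univ, true_and] at hs ⊢
      exact lt_of_lt_of_le hs (hle2 s)
    have step1 : ∑ s ∈ univ.filter (fun s : A × B × C => 0 < q s),
        m12 (s.1, s.2.1) * m23 s.2 / m2 s.2.1
        ≤ ∑ s ∈ univ.filter (fun s : A × B × C => 0 < m2 s.2.1),
            m12 (s.1, s.2.1) * m23 s.2 / m2 s.2.1 := by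
      apply Finset.sum_le_sum_of_subset_of_nonneg hsubset
      intro s hs _
      have : 0 < m2 s.2.1 := (Finset.mem_filter.mp hs).2
      have h1 := hm12nn (s.1, s.2.1)
      have h2 := hm23nn s.2
      positivity
    have step2 : ∑ s ∈ univ.filter (fun s : A × B × C => 0 < m2 s.2.1),
        m12 (s.1, s.2.1) * m23 s.2 / m2 s.2.1
        = ∑ b ∈ univ.filter (fun b : B => 0 < m2 b), m2 b := by
      rw [← Finset.sum_fiberwise_of_maps_to (g := fun s : A × B × C => s.2.1)
        (t := univ.filter (fun b : B => 0 < m2 b))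
        (fun s hs => by
          simp only [Finset.mem_filter, Finset.mem_univ, true_and] at hs ⊢
          exact hs)
        (fun s => m12 (s.1, s.2.1) * m23 s.2 / m2 s.2.1)]
      apply Finset.sum_congr rfl
      intro b hb
      have hb' : 0 < m2 b := (Finset.mem_filter.mp hb).2
      have hff : (univ.filter (fun s : A × B × C => 0 < m2 s.2.1)).filter
          (fun s => s.2.1 = b) = univ.filter (fun s : A × B × C => s.2.1 = b) := by
        ext s
        simp only [Finset.mem_filter, Finset.mem_univ, true_and]
        constructor
        · rintro ⟨_, h⟩; exact h
        · intro h; exact ⟨by rw [h]; exact hb', h⟩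
      rw [hff]
      have hbij : ∑ s ∈ univ.filter (fun s : A × B × C => s.2.1 = b),
          m12 (s.1, s.2.1) * m23 s.2 / m2 s.2.1
          = ∑ p : A × C, m12 (p.1, b) * m23 (b, p.2) / m2 b := by
        apply Finset.sum_nbij' (i := fun s : A × B × C => ((s.1, s.2.2) : A × C))
          (j := fun p : A × C => ((p.1, b, p.2) : A × B × C))
        · intro a _; exact Finset.mem_univ _
        · intro p _; simp
        · rintro ⟨a', b', c'⟩ hs
          have hsb : b' = b := by
            simpa using (Finset.mem_filter.mp hs).2
          subst hsb
          rfl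
        · intro p _; rfl
        · rintro ⟨a', b', c'⟩ hs
          have hsb : b' = b := by
            simpa using (Finset.mem_filter.mp hs).2
          subst hsb
          rfl
      rw [hbij]
      rw [Fintype.sum_prod_type]
      have : ∀ a : A, ∑ c : C, m12 (a, b) * m23 (b, c) / m2 b
          = m12 (a, b) * (∑ c : C, m23 (b, c)) / m2 b := by
        intro a
        rw [Finset.mul_sum, Finset.sum_div]
      rw [Finset.sum_congr rfl (fun a _ => this a)]
      rw [hmarg23 b, ← Finset.sum_div, ← Finset.sum_mul, hmarg12 b]
      field_simp
    have step3 : ∑ b ∈ univ.filter (fun b : B => 0 < m2 b), m2 b ≤ 1 := by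
      rw [← hm2total]
      apply Finset.sum_le_sum_of_subset_of_nonneg (Finset.filter_subset _ _)
      intro b _ _
      exact Finset.sum_nonneg (fun i _ => hq0 i)
    linarith
  -- put everything together
  have main : 0 ≤ ∑ s : A × B × C, q s * (Real.log (q s) + Real.log (m2 s.2.1)
      - Real.log (m12 (s.1, s.2.1)) - Real.log (m23 s.2)) := by
    rw [← hsupp (fun s => q s * (Real.log (q s) + Real.log (m2 s.2.1)
      - Real.log (m12 (s.1, s.2.1)) - Real.log (m23 s.2))) (fun s h => by simp [h])]
    have hstep : ∑ s ∈ univ.filter (fun s : A × B × C => 0 < q s),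
        (q s - m12 (s.1, s.2.1) * m23 s.2 / m2 s.2.1)
        ≤ ∑ s ∈ univ.filter (fun s : A × B × C => 0 < q s),
          q s * (Real.log (q s) + Real.log (m2 s.2.1)
            - Real.log (m12 (s.1, s.2.1)) - Real.log (m23 s.2)) := by
      apply Finset.sum_le_sum
      intro s hs
      exact key s (Finset.mem_filter.mp hs).2
    have hlhs : ∑ s ∈ univ.filter (fun s : A × B × C => 0 < q s),
        (q s - m12 (s.1, s.2.1) * m23 s.2 / m2 s.2.1)
        = 1 - ∑ s ∈ univ.filter (fun s : A × B × C => 0 < q s),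
            m12 (s.1, s.2.1) * m23 s.2 / m2 s.2.1 := by
      rw [Finset.sum_sub_distrib, hsum_supp]
    linarith
  have expand : ∑ s : A × B × C, q s * (Real.log (q s) + Real.log (m2 s.2.1)
      - Real.log (m12 (s.1, s.2.1)) - Real.log (m23 s.2))
      = (∑ s : A × B × C, -(q s) * Real.log (m12 (s.1, s.2.1)))
        + (∑ s : A × B × C, -(q s) * Real.log (m23 s.2))
        - (∑ s : A × B × C, -(q s) * Real.log (q s))
        - (∑ s : A × B × C, -(q s) * Real.log (m2 s.2.1)) := by
    rw [← Finset.sum_add_distrib, ← Finset.sum_sub_distrib, ← Finset.sum_sub_distrib]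
    apply Finset.sum_congr rfl
    intro s _
    ring
  have hgg : entH μ (fun ω => (Y ω, Z ω, T ω)) = ∑ s : A × B × C, -(q s) * Real.log (q s) := hgent
  rw [h12, h23, h2, hgg]
  rw [expand] at main
  linarith

end Submod


section FinsetEnt

variable {Ωt : Type*} [MeasurableSpace Ωt] (μ : Measure Ωt) [IsProbabilityMeasure μ]
variable {L : ℕ} {S : Fin L → Type} [∀ l, Fintype (S l)] [∀ l, MeasurableSpace (S l)]
  [∀ l, MeasurableSingletonClass (S l)] (X : ∀ l, Ωt → S l)

lemma measurable_jointOn (hX : ∀ l, Measurable (X l)) (U : Finset (Fin L)) :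
    Measurable (jointOn X U) :=
  measurable_pi_lambda _ (fun i => hX i)

lemma entHset_nonneg (U : Finset (Fin L)) : 0 ≤ entHset μ X U :=
  entH_nonneg μ _

lemma entHset_submodular (hX : ∀ l, Measurable (X l)) (A B : Finset (Fin L)) :
    entHset μ X (A ∪ B) + entHset μ X (A ∩ B)
      ≤ entHset μ X A + entHset μ X B := by
  classical
  have core := entH_submodular_aux μ (jointOn X (A \ B)) (jointOn X (A ∩ B))
    (jointOn X (B \ A)) (measurable_jointOn X hX _) (measurable_jointOn X hX _)
    (measurable_jointOn X hX _)
  -- identify entHset values with the paired entropies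
  have idI : entHset μ X (A ∩ B) = entH μ (jointOn X (A ∩ B)) := rfl
  have idA : entHset μ X A
      = entH μ (fun ω => (jointOn X (A \ B) ω, jointOn X (A ∩ B) ω)) := by
    have hinj : Function.Injective
        (fun (p : (i : A) → S i) =>
          ((fun i : (A \ B : Finset (Fin L)) => p ⟨i.1, (Finset.mem_sdiff.mp i.2).1⟩,
            fun i : (A ∩ B : Finset (Fin L)) => p ⟨i.1, (Finset.mem_inter.mp i.2).1⟩) :
            ((i : (A \ B : Finset (Fin L))) → S i) × ((i : (A ∩ B : Finset (Fin L))) → S i))) := by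
      intro p q h
      funext i
      by_cases hi : i.1 ∈ B
      · exact congrFun (congrArg Prod.snd h) ⟨i.1, Finset.mem_inter.mpr ⟨i.2, hi⟩⟩
      · exact congrFun (congrArg Prod.fst h) ⟨i.1, Finset.mem_sdiff.mpr ⟨i.2, hi⟩⟩
    exact (entH_comp_injective μ (jointOn X A) _ hinj).symm
  have idB : entHset μ X B
      = entH μ (fun ω => (jointOn X (A ∩ B) ω, jointOn X (B \ A) ω)) := by
    have hinj : Function.Injective
        (fun (p : (i : B) → S i) =>
          ((fun i : (A ∩ B : Finset (Fin L)) => p ⟨i.1, (Finset.mem_inter.mp i.2).2⟩,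
            fun i : (B \ A : Finset (Fin L)) => p ⟨i.1, (Finset.mem_sdiff.mp i.2).1⟩) :
            ((i : (A ∩ B : Finset (Fin L))) → S i) × ((i : (B \ A : Finset (Fin L))) → S i))) := by
      intro p q h
      funext i
      by_cases hi : i.1 ∈ A
      · exact congrFun (congrArg Prod.fst h) ⟨i.1, Finset.mem_inter.mpr ⟨hi, i.2⟩⟩
      · exact congrFun (congrArg Prod.snd h) ⟨i.1, Finset.mem_sdiff.mpr ⟨i.2, hi⟩⟩
    exact (entH_comp_injective μ (jointOn X B) _ hinj).symm
  have idU : entHset μ X (A ∪ B)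
      = entH μ (fun ω => (jointOn X (A \ B) ω, jointOn X (A ∩ B) ω,
          jointOn X (B \ A) ω)) := by
    have hinj : Function.Injective
        (fun (p : (i : (A ∪ B : Finset (Fin L))) → S i) =>
          ((fun i : (A \ B : Finset (Fin L)) =>
              p ⟨i.1, Finset.mem_union_left _ (Finset.mem_sdiff.mp i.2).1⟩,
            (fun i : (A ∩ B : Finset (Fin L)) =>
              p ⟨i.1, Finset.mem_union_left _ (Finset.mem_inter.mp i.2).1⟩,
             fun i : (B \ A : Finset (Fin L)) =>
              p ⟨i.1, Finset.mem_union_right _ (Finset.mem_sdiff.mp i.2).1⟩)) :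
            ((i : (A \ B : Finset (Fin L))) → S i) ×
              (((i : (A ∩ B : Finset (Fin L))) → S i) ×
                ((i : (B \ A : Finset (Fin L))) → S i)))) := by
      intro p q h
      funext i
      have hiU : i.1 ∈ A ∪ B := i.2
      by_cases hiA : i.1 ∈ A
      · by_cases hiB : i.1 ∈ B
        · exact congrFun (congrArg Prod.fst (congrArg Prod.snd h))
            ⟨i.1, Finset.mem_inter.mpr ⟨hiA, hiB⟩⟩
        · exact congrFun (congrArg Prod.fst h) ⟨i.1, Finset.mem_sdiff.mpr ⟨hiA, hiB⟩⟩
      · have hiB : i.1 ∈ B := by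
          rcases Finset.mem_union.mp hiU with h' | h'
          · exact absurd h' hiA
          · exact h'
        exact congrFun (congrArg Prod.snd (congrArg Prod.snd h))
          ⟨i.1, Finset.mem_sdiff.mpr ⟨hiB, hiA⟩⟩
    exact (entH_comp_injective μ (jointOn X (A ∪ B)) _ hinj).symm
  rw [idA, idB, idU, idI]
  exact core

lemma entHset_han (hX : ∀ l, Measurable (X l)) (W : Finset (Fin L)) :
    ∀ (M : Finset (Fin L)), M ⊆ W →
    ((M.card : ℝ) - 1) * entHset μ X W + entHset μ X (W \ M)
      ≤ ∑ m ∈ M, entHset μ X (W.erase m) := by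
  classical
  intro M
  induction M using Finset.induction_on with
  | empty =>
    intro _
    simp
  | insert m M' hm IH =>
    intro hMW
    have hmW : m ∈ W := hMW (Finset.mem_insert_self m M')
    have hM'W : M' ⊆ W := fun x hx => hMW (Finset.mem_insert_of_mem hx)
    have IH' := IH hM'W
    have hsub : entHset μ X ((W.erase m) ∪ (W \ M')) + entHset μ X ((W.erase m) ∩ (W \ M'))
        ≤ entHset μ X (W.erase m) + entHset μ X (W \ M') :=
      entHset_submodular μ X hX _ _
    have hU : (W.erase m) ∪ (W \ M') = W := by
      ext x
      simp only [Finset.mem_union, Finset.mem_erase, Finset.mem_sdiff]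
      constructor
      · rintro (⟨_, h⟩ | ⟨h, _⟩) <;> exact h
      · intro hx
        by_cases hxm : x = m
        · subst hxm
          exact Or.inr ⟨hx, hm⟩
        · exact Or.inl ⟨hxm, hx⟩
    have hI : (W.erase m) ∩ (W \ M') = W \ (insert m M') := by
      ext x
      simp only [Finset.mem_inter, Finset.mem_erase, Finset.mem_sdiff, Finset.mem_insert]
      tauto
    rw [hU, hI] at hsub
    rw [Finset.sum_insert hm, Finset.card_insert_of_notMem hm]
    push_cast
    linarith

lemma entHset_weighted_han (hX : ∀ l, Measurable (X l)) (W : Finset (Fin L)) :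
    ∀ (n : ℕ) (M : Finset (Fin L)), M.card ≤ n → M ⊆ W → ∀ (hM : M.Nonempty)
    (w : Fin L → ℝ), (∀ m ∈ M, 0 ≤ w m) →
    (∑ m ∈ M, w m - M.sup' hM w) * entHset μ X W
      ≤ ∑ m ∈ M, w m * entHset μ X (W.erase m) := by
  classical
  intro n
  induction n with
  | zero =>
    intro M hn _ hM _ _
    exact absurd (Finset.card_pos.mpr hM) (by omega)
  | succ n IHn =>
    intro M hn hMW hM w hw
    by_cases hcard : M.card = 1
    · obtain ⟨m, hm⟩ := Finset.card_eq_one.mp hcard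
      subst hm
      simp only [Finset.sum_singleton, Finset.sup'_singleton, sub_self, zero_mul]
      exact mul_nonneg (hw m (Finset.mem_singleton_self m)) (entHset_nonneg μ X _)
    · have hcard2 : 2 ≤ M.card := by
        have := Finset.card_pos.mpr hM
        omega
      obtain ⟨m0, hm0, hminf⟩ := Finset.exists_mem_eq_inf' hM w
      set M' := M.erase m0 with hM'def
      have hcard' : M'.card = M.card - 1 := Finset.card_erase_of_mem hm0
      have hM' : M'.Nonempty := Finset.card_pos.mp (by omega)
      have hM'W : M' ⊆ W := fun x hx => hMW (Finset.mem_of_mem_erase hx)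
      have hw0 : 0 ≤ w m0 := hw m0 hm0
      have hwmin : ∀ m ∈ M, w m0 ≤ w m := by
        intro m hm
        rw [← hminf]
        exact Finset.inf'_le w hm
    -- shifted weights
      have hw' : ∀ m ∈ M', 0 ≤ w m - w m0 := by
        intro m hm
        have := hwmin m (Finset.mem_of_mem_erase hm)
        linarith
      have IH' := IHn M' (by omega) hM'W hM' (fun m => w m - w m0) hw'
      -- sup' of shifted weights
      have hsup_eq : M'.sup' hM' (fun m => w m - w m0) = M.sup' hM w - w m0 := by
        apply le_antisymm
        · apply Finset.sup'_le
          intro m hm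
          have : w m ≤ M.sup' hM w := Finset.le_sup' w (Finset.mem_of_mem_erase hm)
          linarith
        · obtain ⟨m1, hm1, hm1eq⟩ := Finset.exists_mem_eq_sup' hM w
          by_cases hm10 : m1 = m0
          · -- all weights equal w m0
            obtain ⟨m2, hm2⟩ := id hM'
            have h1 : w m2 ≤ M.sup' hM w := Finset.le_sup' w (Finset.mem_of_mem_erase hm2)
            have h2 : w m0 ≤ w m2 := hwmin m2 (Finset.mem_of_mem_erase hm2)
            have h3 : w m2 - w m0 ≤ M'.sup' hM' (fun m => w m - w m0) :=
              Finset.le_sup' (fun m => w m - w m0) hm2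
            rw [hm1eq, hm10]
            linarith
          · have hm1' : m1 ∈ M' := Finset.mem_erase.mpr ⟨hm10, hm1⟩
            have h3 : w m1 - w m0 ≤ M'.sup' hM' (fun m => w m - w m0) :=
              Finset.le_sup' (fun m => w m - w m0) hm1'
            rw [hm1eq]
            linarith
      -- sum of shifted weights
      have hsum_eq : ∑ m ∈ M', (w m - w m0) = ∑ m ∈ M, w m - (M.card : ℝ) * w m0 := by
        have h1 : ∑ m ∈ M', (w m - w m0) = ∑ m ∈ M, (w m - w m0) - (w m0 - w m0) :=
          Finset.sum_erase_eq_sub hm0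
        rw [h1, Finset.sum_sub_distrib, Finset.sum_const, nsmul_eq_mul]
        ring
      -- decomposition of the weighted sum of entropies
      have hsplit : ∑ m ∈ M', (w m - w m0) * entHset μ X (W.erase m)
          = ∑ m ∈ M, w m * entHset μ X (W.erase m)
            - w m0 * ∑ m ∈ M, entHset μ X (W.erase m) := by
        have h1 : ∑ m ∈ M', (w m - w m0) * entHset μ X (W.erase m)
            = ∑ m ∈ M, (w m - w m0) * entHset μ X (W.erase m)
              - (w m0 - w m0) * entHset μ X (W.erase m0) :=
          Finset.sum_erase_eq_sub hm0
        rw [h1, Finset.mul_sum, ← Finset.sum_sub_distrib]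
        have : ∀ m ∈ M, (w m - w m0) * entHset μ X (W.erase m)
            = w m * entHset μ X (W.erase m) - w m0 * entHset μ X (W.erase m) := by
          intro m _
          ring
        rw [Finset.sum_congr rfl this]
        ring
      -- Han inequality for the full family
      have hhan : ((M.card : ℝ) - 1) * entHset μ X W
          ≤ ∑ m ∈ M, entHset μ X (W.erase m) := by
        have := entHset_han μ X hX W M hMW
        have hnn := entHset_nonneg μ X (W \ M)
        linarith
      have hhan' : w m0 * (((M.card : ℝ) - 1) * entHset μ X W)
          ≤ w m0 * ∑ m ∈ M, entHset μ X (W.erase m) :=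
        mul_le_mul_of_nonneg_left hhan hw0
      rw [hsum_eq, hsup_eq] at IH'
      rw [hsplit] at IH'
      nlinarith [IH', hhan']

lemma entHset_weighted_han' (hX : ∀ l, Measurable (X l)) (U : Finset (Fin L))
    (hU : U.Nonempty) (w : Fin L → ℝ) (hw : ∀ m ∈ U, 0 ≤ w m) (c : ℝ)
    (hc : ∀ l ∈ U, c ≤ ∑ m ∈ U.erase l, w m) :
    c * entHset μ X U ≤ ∑ m ∈ U, w m * entHset μ X (U.erase m) := by
  classical
  have hmain := entHset_weighted_han μ X hX U U.card U le_rfl Finset.Subset.rfl hU w hw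
  obtain ⟨l0, hl0, hl0eq⟩ := Finset.exists_mem_eq_sup' hU w
  have herase : ∑ m ∈ U.erase l0, w m = ∑ m ∈ U, w m - w l0 := by
    have := Finset.sum_erase_eq_sub (f := w) hl0
    linarith [this]
  have hcle : c ≤ ∑ m ∈ U, w m - U.sup' hU w := by
    have := hc l0 hl0
    rw [herase] at this
    rw [hl0eq]
    linarith
  have hHnn := entHset_nonneg μ X U
  calc c * entHset μ X U ≤ (∑ m ∈ U, w m - U.sup' hU w) * entHset μ X U :=
        mul_le_mul_of_nonneg_right hcle hHnn
    _ ≤ ∑ m ∈ U, w m * entHset μ X (U.erase m) := hmain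

end FinsetEnt

noncomputable def Fval (L : ℕ) (lam : Fin L → ℝ) (α : ℕ) : ℝ :=
  if h : 0 < α then
    ((Finset.univ : Finset (Finset (Fin L))).filter (fun T => T.card < α)).inf'
      ⟨∅, by simp [h]⟩ (fun T => (∑ l ∈ Tᶜ, lam l) / ((α : ℝ) - T.card))
  else 0

section FvalLemmas

variable {L : ℕ} {lam : Fin L → ℝ} {α : ℕ}

lemma Fval_le (hα : 0 < α) {T : Finset (Fin L)} (hT : T.card < α) :
    Fval L lam α ≤ (∑ l ∈ Tᶜ, lam l) / ((α : ℝ) - T.card) := by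
  rw [Fval, dif_pos hα]
  exact Finset.inf'_le (fun T : Finset (Fin L) => (∑ l ∈ Tᶜ, lam l) / ((α : ℝ) - T.card))
    (Finset.mem_filter.mpr ⟨Finset.mem_univ _, hT⟩)

lemma Fval_exists_min (hα : 0 < α) :
    ∃ T : Finset (Fin L), T.card < α ∧
      Fval L lam α = (∑ l ∈ Tᶜ, lam l) / ((α : ℝ) - T.card) := by
  rw [Fval, dif_pos hα]
  obtain ⟨T, hT, hTeq⟩ := Finset.exists_mem_eq_inf'
    (⟨∅, by simp [hα]⟩ : ((Finset.univ : Finset (Finset (Fin L))).filter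
      (fun T => T.card < α)).Nonempty)
    (fun T => (∑ l ∈ Tᶜ, lam l) / ((α : ℝ) - T.card))
  exact ⟨T, (Finset.mem_filter.mp hT).2, hTeq⟩

lemma Fval_denom_pos {T : Finset (Fin L)} (hT : T.card < α) :
    0 < (α : ℝ) - T.card := by
  have : (T.card : ℝ) < (α : ℝ) := by exact_mod_cast hT
  linarith

lemma Fval_nonneg (hlam : ∀ l, 0 ≤ lam l) (α : ℕ) : 0 ≤ Fval L lam α := by
  by_cases hα : 0 < α
  · obtain ⟨T, hT, hTeq⟩ := Fval_exists_min (lam := lam) hα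
    rw [hTeq]
    exact div_nonneg (Finset.sum_nonneg fun l _ => hlam l) (Fval_denom_pos hT).le
  · rw [Fval, dif_neg hα]

lemma Fval_anti (hlam : ∀ l, 0 ≤ lam l) (hα : 0 < α) :
    Fval L lam (α + 1) ≤ Fval L lam α := by
  obtain ⟨T, hT, hTeq⟩ := Fval_exists_min (lam := lam) hα
  rw [hTeq]
  calc Fval L lam (α + 1) ≤ (∑ l ∈ Tᶜ, lam l) / ((α + 1 : ℕ) - (T.card : ℝ)) :=
        Fval_le (by omega) (by omega)
    _ ≤ (∑ l ∈ Tᶜ, lam l) / ((α : ℝ) - T.card) := by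
        apply div_le_div_of_nonneg_left (Finset.sum_nonneg fun l _ => hlam l)
          (Fval_denom_pos hT)
        push_cast
        linarith

lemma Fval_min_sum (hlam : ∀ l, 0 ≤ lam l) (hα : 0 < α) :
    ∑ l, min (lam l) (Fval L lam α) = (α : ℝ) * Fval L lam α := by
  classical
  set F := Fval L lam α with hFdef
  have hF0 : 0 ≤ F := Fval_nonneg hlam α
  apply le_antisymm
  · obtain ⟨T, hT, hTeq⟩ := Fval_exists_min (lam := lam) hα
    have hd := Fval_denom_pos (α := α) hT
    have hnum : ∑ l ∈ Tᶜ, lam l = ((α : ℝ) - T.card) * F := by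
      rw [hFdef, hTeq]
      field_simp
    rw [← Finset.sum_add_sum_compl T (fun l => min (lam l) F)]
    have h1 : ∑ l ∈ T, min (lam l) F ≤ (T.card : ℝ) * F := by
      calc ∑ l ∈ T, min (lam l) F ≤ ∑ l ∈ T, F :=
            Finset.sum_le_sum fun l _ => min_le_right _ _
        _ = (T.card : ℝ) * F := by rw [Finset.sum_const, nsmul_eq_mul]
    have h2 : ∑ l ∈ Tᶜ, min (lam l) F ≤ ((α : ℝ) - T.card) * F := by
      rw [← hnum]
      exact Finset.sum_le_sum fun l _ => min_le_left _ _
    linarith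
  · set T₀ := Finset.univ.filter (fun l => F < lam l) with hT₀def
    have hminT₀ : ∀ l ∈ T₀, min (lam l) F = F := by
      intro l hl
      exact min_eq_right (le_of_lt (Finset.mem_filter.mp hl).2)
    have hminT₀c : ∀ l ∈ T₀ᶜ, min (lam l) F = lam l := by
      intro l hl
      have : ¬ (F < lam l) := by
        have := Finset.mem_compl.mp hl
        simpa [hT₀def] using this
      exact min_eq_left (le_of_not_gt this)
    by_cases hc : T₀.card < α
    · have hkey : ((α : ℝ) - T₀.card) * F ≤ ∑ l ∈ T₀ᶜ, lam l := by
        have h := Fval_le (lam := lam) hα hc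
        rw [← hFdef] at h
        rw [mul_comm]
        exact (le_div_iff₀ (Fval_denom_pos hc)).mp h
      rw [← Finset.sum_add_sum_compl T₀ (fun l => min (lam l) F)]
      rw [Finset.sum_congr rfl hminT₀, Finset.sum_congr rfl hminT₀c]
      rw [Finset.sum_const, nsmul_eq_mul]
      linarith
    · push_neg at hc
      have h1 : (α : ℝ) * F ≤ (T₀.card : ℝ) * F := by
        apply mul_le_mul_of_nonneg_right _ hF0
        exact_mod_cast hc
      have h2 : ∑ l ∈ T₀, min (lam l) F = (T₀.card : ℝ) * F := by
        rw [Finset.sum_congr rfl hminT₀, Finset.sum_const, nsmul_eq_mul]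
      have h3 : ∑ l ∈ T₀, min (lam l) F ≤ ∑ l, min (lam l) F := by
        apply Finset.sum_le_sum_of_subset_of_nonneg (Finset.subset_univ _)
        intro l _ _
        exact le_min (hlam l) hF0
      linarith

lemma Fval_dual_bound (hlam : ∀ l, 0 ≤ lam l) (hα : 0 < α)
    (c : Finset (Fin L) → ℝ) (hc0 : ∀ U ∈ OmegaL L α, 0 ≤ c U)
    (hcov : ∀ l : Fin L, ∑ U ∈ (OmegaL L α).filter (fun U => l ∈ U), c U ≤ lam l) :
    ∑ U ∈ OmegaL L α, c U ≤ Fval L lam α := by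
  classical
  obtain ⟨T, hT, hTeq⟩ := Fval_exists_min (lam := lam) hα
  have hdpos := Fval_denom_pos (α := α) hT
  rw [hTeq, le_div_iff₀ hdpos]
  have h1 : ∀ U ∈ OmegaL L α, c U * ((α : ℝ) - T.card) ≤ ((U \ T).card : ℝ) * c U := by
    intro U hU
    have hcard : U.card = α := (Finset.mem_powersetCard.mp hU).2
    have hnat : α ≤ (U \ T).card + T.card := by
      rw [← hcard]
      exact Finset.card_le_card_sdiff_add_card
    have hreal : (α : ℝ) - T.card ≤ ((U \ T).card : ℝ) := by
      have : (α : ℝ) ≤ ((U \ T).card : ℝ) + (T.card : ℝ) := by exact_mod_cast hnat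
      linarith
    calc c U * ((α : ℝ) - T.card) ≤ c U * ((U \ T).card : ℝ) :=
          mul_le_mul_of_nonneg_left hreal (hc0 U hU)
      _ = ((U \ T).card : ℝ) * c U := mul_comm _ _
  calc (∑ U ∈ OmegaL L α, c U) * ((α : ℝ) - T.card)
      = ∑ U ∈ OmegaL L α, c U * ((α : ℝ) - T.card) := Finset.sum_mul _ _ _
    _ ≤ ∑ U ∈ OmegaL L α, ((U \ T).card : ℝ) * c U := Finset.sum_le_sum h1
    _ = ∑ U ∈ OmegaL L α, ∑ l ∈ U \ T, c U := by
        apply Finset.sum_congr rfl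
        intro U _
        rw [Finset.sum_const, nsmul_eq_mul]
    _ = ∑ l ∈ Tᶜ, ∑ U ∈ (OmegaL L α).filter (fun U => l ∈ U), c U := by
        apply Finset.sum_comm'
        intro U l
        simp only [Finset.mem_sdiff, Finset.mem_filter, Finset.mem_compl]
        tauto
    _ ≤ ∑ l ∈ Tᶜ, lam l := Finset.sum_le_sum fun l _ => hcov l

lemma fLP_eq_Fval (hlam : ∀ l, 0 ≤ lam l) (hα : 0 < α)
    (c₀ : Finset (Fin L) → ℝ) (hc0 : ∀ U ∈ OmegaL L α, 0 ≤ c₀ U)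
    (hcov : ∀ l : Fin L, ∑ U ∈ (OmegaL L α).filter (fun U => l ∈ U), c₀ U ≤ lam l)
    (htot : ∑ U ∈ OmegaL L α, c₀ U = Fval L lam α) :
    fLP L lam α = Fval L lam α := by
  have hmem : Fval L lam α ∈ { x : ℝ | ∃ c : Finset (Fin L) → ℝ,
      (∀ U ∈ OmegaL L α, 0 ≤ c U) ∧
      (∀ l : Fin L, ∑ U ∈ (OmegaL L α).filter (fun U => l ∈ U), c U ≤ lam l) ∧
      x = ∑ U ∈ OmegaL L α, c U } := ⟨c₀, hc0, hcov, htot.symm⟩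
  apply le_antisymm
  · apply csSup_le ⟨Fval L lam α, hmem⟩
    rintro x ⟨c, h0, hcv, rfl⟩
    exact Fval_dual_bound hlam hα c h0 hcv
  · apply le_csSup _ hmem
    refine ⟨Fval L lam α, ?_⟩
    rintro x ⟨c, h0, hcv, rfl⟩
    exact Fval_dual_bound hlam hα c h0 hcv

end FvalLemmas


section Hyper

variable {L : ℕ}

lemma hypersimplex (α : ℕ) (hα : 0 < α) (hαL : α ≤ L) :
    ∀ (n : ℕ) (e : Fin L → ℝ) (f : ℝ), 0 ≤ f → (∀ l, 0 ≤ e l) → (∀ l, e l ≤ f) →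
    (∑ l, e l) = (α : ℝ) * f →
    ((Finset.univ.filter (fun l => e l ≠ 0 ∧ e l ≠ f)).card ≤ n) →
    ∃ c : Finset (Fin L) → ℝ,
      (∀ U, 0 ≤ c U) ∧ (∀ U, c U ≠ 0 → U ∈ OmegaL L α) ∧
      (∀ l : Fin L, ∑ U ∈ (OmegaL L α).filter (fun U => l ∈ U), c U = e l) ∧
      (∑ U ∈ OmegaL L α, c U = f) := by
  classical
  intro n
  induction n with
  | zero =>
    intro e f hf0 he0 hef hsum hcard
    have hall : ∀ l, e l = 0 ∨ e l = f := by
      intro l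
      by_contra h
      push_neg at h
      have hmem : l ∈ Finset.univ.filter (fun l => e l ≠ 0 ∧ e l ≠ f) := by
        simp [h.1, h.2]
      have := Finset.card_pos.mpr ⟨l, hmem⟩
      omega
    by_cases hf : f = 0
    · subst hf
      refine ⟨fun _ => 0, fun U => le_rfl, fun U h => absurd rfl h, ?_, by simp⟩
      intro l
      have : e l = 0 := le_antisymm (hef l) (he0 l)
      simp [this]
    · set A := Finset.univ.filter (fun l => e l = f) with hAdef
      have hsum2 : ∑ l, e l = (A.card : ℝ) * f := by
        rw [← Finset.sum_add_sum_compl A e]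
        have h1 : ∑ l ∈ A, e l = (A.card : ℝ) * f := by
          rw [Finset.sum_congr rfl (fun l hl => (Finset.mem_filter.mp hl).2),
            Finset.sum_const, nsmul_eq_mul]
        have h2 : ∑ l ∈ Aᶜ, e l = 0 := by
          apply Finset.sum_eq_zero
          intro l hl
          have hlf : ¬ (e l = f) := by
            have := Finset.mem_compl.mp hl
            simpa [hAdef] using this
          rcases hall l with h | h
          · exact h
          · exact absurd h hlf
        rw [h1, h2]; ring
      have hcardA : A.card = α := by
        have h := hsum2.symm.trans hsum
        have := mul_right_cancel₀ hf h
        exact_mod_cast this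
      have hAmem : A ∈ OmegaL L α :=
        Finset.mem_powersetCard.mpr ⟨Finset.subset_univ _, hcardA⟩
      refine ⟨fun U => if U = A then f else 0, ?_, ?_, ?_, ?_⟩
      · intro U
        by_cases hUA : U = A
        · simp [hUA, hf0]
        · simp [hUA]
      · intro U h
        by_cases hUA : U = A
        · subst hUA; exact hAmem
        · simp [hUA] at h
      · intro l
        rw [Finset.sum_ite_eq' ((OmegaL L α).filter (fun U => l ∈ U)) A (fun _ => f)]
        by_cases hl : l ∈ A
        · have hAf : A ∈ (OmegaL L α).filter (fun U => l ∈ U) :=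
            Finset.mem_filter.mpr ⟨hAmem, hl⟩
          rw [if_pos hAf]
          exact ((Finset.mem_filter.mp hl).2).symm
        · have hAf : A ∉ (OmegaL L α).filter (fun U => l ∈ U) :=
            fun hmem => hl (Finset.mem_filter.mp hmem).2
          rw [if_neg hAf]
          have hlf : ¬ (e l = f) := by
            intro h
            exact hl (Finset.mem_filter.mpr ⟨Finset.mem_univ _, h⟩)
          rcases hall l with h | h
          · exact h.symm
          · exact absurd h hlf
      · rw [Finset.sum_ite_eq' (OmegaL L α) A (fun _ => f), if_pos hAmem]
  | succ n IH =>
    intro e f hf0 he0 hef hsum hcard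
    by_cases hle : (Finset.univ.filter (fun l => e l ≠ 0 ∧ e l ≠ f)).card ≤ n
    · exact IH e f hf0 he0 hef hsum hle
    · set Fr := Finset.univ.filter (fun l => e l ≠ 0 ∧ e l ≠ f) with hFrdef
      have hfpos : 0 < f := by
        rcases lt_or_eq_of_le hf0 with h | h
        · exact h
        · exfalso
          apply hle
          have hFr : Finset.univ.filter (fun l : Fin L => e l ≠ 0 ∧ e l ≠ f) = ∅ := by
            apply Finset.filter_false_of_mem
            intro l _
            have h1 : e l = 0 := by
              have h2 := hef l
              rw [← h] at h2
              exact le_antisymm h2 (he0 l)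
            intro hcon
            exact hcon.1 h1
          rw [hFrdef, hFr]
          simp
      have hcard1 : Fr.card ≠ 1 := by
        intro h1
        obtain ⟨l0, hl0⟩ := Finset.card_eq_one.mp h1
        have hl0mem : l0 ∈ Fr := by rw [hl0]; exact Finset.mem_singleton_self l0
        have hl0frac : e l0 ≠ 0 ∧ e l0 ≠ f := (Finset.mem_filter.mp hl0mem).2
        have hl0pos : 0 < e l0 := lt_of_le_of_ne (he0 l0) (Ne.symm hl0frac.1)
        have hl0lt : e l0 < f := lt_of_le_of_ne (hef l0) hl0frac.2
        set A := Finset.univ.filter (fun l => e l = f) with hAdef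
        have hsumA : ∑ l, e l = (A.card : ℝ) * f + e l0 := by
          rw [← Finset.sum_add_sum_compl A e]
          have h1' : ∑ l ∈ A, e l = (A.card : ℝ) * f := by
            rw [Finset.sum_congr rfl (fun l hl => (Finset.mem_filter.mp hl).2),
              Finset.sum_const, nsmul_eq_mul]
          have hl0A : l0 ∈ Aᶜ := by
            rw [Finset.mem_compl, hAdef]
            intro hmem
            exact hl0frac.2 (Finset.mem_filter.mp hmem).2
          have h2' : ∑ l ∈ Aᶜ, e l = e l0 := by
            apply Finset.sum_eq_single_of_mem l0 hl0A
            intro l hl hne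
            have hlf : e l ≠ f := by
              have := Finset.mem_compl.mp hl
              rw [hAdef] at this
              intro hh
              exact this (Finset.mem_filter.mpr ⟨Finset.mem_univ _, hh⟩)
            by_contra hnz
            have : l ∈ Fr := Finset.mem_filter.mpr ⟨Finset.mem_univ _, hnz, hlf⟩
            rw [hl0] at this
            exact hne (Finset.mem_singleton.mp this)
          rw [h1', h2']
        have hkey : e l0 = ((α : ℝ) - A.card) * f := by
          have h' : (α : ℝ) * f = (A.card : ℝ) * f + e l0 := by
            rw [← hsum]; exact hsumA
          linarith
        rcases lt_or_ge A.card α with hk | hk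
        · have : (1 : ℝ) ≤ (α : ℝ) - A.card := by
            have : (A.card : ℝ) + 1 ≤ (α : ℝ) := by exact_mod_cast hk
            linarith
          nlinarith
        · have : (α : ℝ) - A.card ≤ 0 := by
            have : (α : ℝ) ≤ (A.card : ℝ) := by exact_mod_cast hk
            linarith
          nlinarith
      have hcard2 : 1 < Fr.card := by
        omega
      obtain ⟨l1, hl1, l2, hl2, hne12⟩ := Finset.one_lt_card.mp hcard2
      have hl1frac : e l1 ≠ 0 ∧ e l1 ≠ f := (Finset.mem_filter.mp hl1).2
      have hl2frac : e l2 ≠ 0 ∧ e l2 ≠ f := (Finset.mem_filter.mp hl2).2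
      have hl1pos : 0 < e l1 := lt_of_le_of_ne (he0 l1) (Ne.symm hl1frac.1)
      have hl1lt : e l1 < f := lt_of_le_of_ne (hef l1) hl1frac.2
      have hl2pos : 0 < e l2 := lt_of_le_of_ne (he0 l2) (Ne.symm hl2frac.1)
      have hl2lt : e l2 < f := lt_of_le_of_ne (hef l2) hl2frac.2
      set t1 := min (f - e l1) (e l2) with ht1def
      set t2 := min (e l1) (f - e l2) with ht2def
      have ht1pos : 0 < t1 := lt_min (by linarith) hl2pos
      have ht2pos : 0 < t2 := lt_min hl1pos (by linarith)
      set e1 : Fin L → ℝ := fun l => if l = l1 then e l1 + t1 else if l = l2 then e l2 - t1 else e l with he1def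
      set e2 : Fin L → ℝ := fun l => if l = l1 then e l1 - t2 else if l = l2 then e l2 + t2 else e l with he2def
      have hdiff1 : ∀ l, e1 l - e l = (if l = l1 then t1 else 0) + (if l = l2 then -t1 else 0) := by
        intro l
        simp only [he1def]
        by_cases h1 : l = l1
        · subst h1
          rw [if_pos rfl, if_pos rfl, if_neg hne12]
          ring
        · by_cases h2 : l = l2
          · subst h2
            rw [if_neg h1, if_pos rfl, if_neg h1, if_pos rfl]
            ring
          · rw [if_neg h1, if_neg h2, if_neg h1, if_neg h2]
            ring
      have hdiff2 : ∀ l, e2 l - e l = (if l = l1 then -t2 else 0) + (if l = l2 then t2 else 0) := by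
        intro l
        simp only [he2def]
        by_cases h1 : l = l1
        · subst h1
          rw [if_pos rfl, if_pos rfl, if_neg hne12]
          ring
        · by_cases h2 : l = l2
          · subst h2
            rw [if_neg h1, if_pos rfl, if_neg h1, if_pos rfl]
            ring
          · rw [if_neg h1, if_neg h2, if_neg h1, if_neg h2]
            ring
      have hsum1 : ∑ l, e1 l = (α : ℝ) * f := by
        have h := Finset.sum_congr rfl (fun l (_ : l ∈ Finset.univ) => hdiff1 l)
        rw [Finset.sum_sub_distrib, Finset.sum_add_distrib] at h
        rw [Finset.sum_ite_eq' Finset.univ l1 (fun _ => t1)] at h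
        rw [Finset.sum_ite_eq' Finset.univ l2 (fun _ => -t1)] at h
        simp only [Finset.mem_univ, if_true] at h
        rw [← hsum]
        linarith
      have hsum2 : ∑ l, e2 l = (α : ℝ) * f := by
        have h := Finset.sum_congr rfl (fun l (_ : l ∈ Finset.univ) => hdiff2 l)
        rw [Finset.sum_sub_distrib, Finset.sum_add_distrib] at h
        rw [Finset.sum_ite_eq' Finset.univ l1 (fun _ => -t2)] at h
        rw [Finset.sum_ite_eq' Finset.univ l2 (fun _ => t2)] at h
        simp only [Finset.mem_univ, if_true] at h
        rw [← hsum]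
        linarith
      have he10 : ∀ l, 0 ≤ e1 l := by
        intro l
        simp only [he1def]
        by_cases h1 : l = l1
        · rw [if_pos h1]; linarith
        · rw [if_neg h1]
          by_cases h2 : l = l2
          · rw [if_pos h2]
            have hmr := min_le_right (f - e l1) (e l2)
            rw [← ht1def] at hmr
            linarith
          · rw [if_neg h2]; exact he0 l
      have he1f : ∀ l, e1 l ≤ f := by
        intro l
        simp only [he1def]
        by_cases h1 : l = l1
        · rw [if_pos h1]
          have hml := min_le_left (f - e l1) (e l2)
          rw [← ht1def] at hml
          linarith
        · rw [if_neg h1]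
          by_cases h2 : l = l2
          · rw [if_pos h2]; linarith
          · rw [if_neg h2]; exact hef l
      have he20 : ∀ l, 0 ≤ e2 l := by
        intro l
        simp only [he2def]
        by_cases h1 : l = l1
        · rw [if_pos h1]
          have hml := min_le_left (e l1) (f - e l2)
          rw [← ht2def] at hml
          linarith
        · rw [if_neg h1]
          by_cases h2 : l = l2
          · rw [if_pos h2]; linarith
          · rw [if_neg h2]; exact he0 l
      have he2f : ∀ l, e2 l ≤ f := by
        intro l
        simp only [he2def]
        by_cases h1 : l = l1
        · rw [if_pos h1]; linarith
        · rw [if_neg h1]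
          by_cases h2 : l = l2
          · rw [if_pos h2]
            have hmr := min_le_right (e l1) (f - e l2)
            rw [← ht2def] at hmr
            linarith
          · rw [if_neg h2]; exact hef l
      -- fractional support shrinks
      have hsubgen1 : Finset.univ.filter (fun l => e1 l ≠ 0 ∧ e1 l ≠ f) ⊆ Fr := by
        intro l hl
        have hl' := (Finset.mem_filter.mp hl).2
        rw [hFrdef]
        apply Finset.mem_filter.mpr
        refine ⟨Finset.mem_univ _, ?_⟩
        by_cases h1 : l = l1
        · subst h1; exact hl1frac
        · by_cases h2 : l = l2
          · subst h2; exact hl2frac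
          · simp only [he1def, if_neg h1, if_neg h2] at hl'
            exact hl'
      have hsubgen2 : Finset.univ.filter (fun l => e2 l ≠ 0 ∧ e2 l ≠ f) ⊆ Fr := by
        intro l hl
        have hl' := (Finset.mem_filter.mp hl).2
        rw [hFrdef]
        apply Finset.mem_filter.mpr
        refine ⟨Finset.mem_univ _, ?_⟩
        by_cases h1 : l = l1
        · subst h1; exact hl1frac
        · by_cases h2 : l = l2
          · subst h2; exact hl2frac
          · simp only [he2def, if_neg h1, if_neg h2] at hl'
            exact hl'
      have hne21 : l2 ≠ l1 := Ne.symm hne12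
      have hkill1 : ∃ x ∈ Fr, x ∉ Finset.univ.filter (fun l => e1 l ≠ 0 ∧ e1 l ≠ f) := by
        rcases min_cases (f - e l1) (e l2) with ⟨hmin, _⟩ | ⟨hmin, _⟩
        · refine ⟨l1, hl1, ?_⟩
          intro hmem
          have hx := (Finset.mem_filter.mp hmem).2.2
          apply hx
          have hev : e1 l1 = e l1 + t1 := by simp [he1def]
          rw [hev, ht1def, hmin]
          ring
        · refine ⟨l2, hl2, ?_⟩
          intro hmem
          have hx := (Finset.mem_filter.mp hmem).2.1
          apply hx
          have hev : e1 l2 = e l2 - t1 := by simp [he1def, hne21]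
          rw [hev, ht1def, hmin]
          ring
      have hkill2 : ∃ x ∈ Fr, x ∉ Finset.univ.filter (fun l => e2 l ≠ 0 ∧ e2 l ≠ f) := by
        rcases min_cases (e l1) (f - e l2) with ⟨hmin, _⟩ | ⟨hmin, _⟩
        · refine ⟨l1, hl1, ?_⟩
          intro hmem
          have hx := (Finset.mem_filter.mp hmem).2.1
          apply hx
          have hev : e2 l1 = e l1 - t2 := by simp [he2def]
          rw [hev, ht2def, hmin]
          ring
        · refine ⟨l2, hl2, ?_⟩
          intro hmem
          have hx := (Finset.mem_filter.mp hmem).2.2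
          apply hx
          have hev : e2 l2 = e l2 + t2 := by simp [he2def, hne21]
          rw [hev, ht2def, hmin]
          ring
      have hcard1' : (Finset.univ.filter (fun l => e1 l ≠ 0 ∧ e1 l ≠ f)).card ≤ n := by
        obtain ⟨x, hxFr, hxnot⟩ := hkill1
        have hsub : Finset.univ.filter (fun l => e1 l ≠ 0 ∧ e1 l ≠ f) ⊆ Fr.erase x :=
          Finset.subset_erase.mpr ⟨hsubgen1, hxnot⟩
        have h1 := Finset.card_le_card hsub
        have h2 : (Fr.erase x).card = Fr.card - 1 := Finset.card_erase_of_mem hxFr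
        omega
      have hcard2' : (Finset.univ.filter (fun l => e2 l ≠ 0 ∧ e2 l ≠ f)).card ≤ n := by
        obtain ⟨x, hxFr, hxnot⟩ := hkill2
        have hsub : Finset.univ.filter (fun l => e2 l ≠ 0 ∧ e2 l ≠ f) ⊆ Fr.erase x :=
          Finset.subset_erase.mpr ⟨hsubgen2, hxnot⟩
        have h1 := Finset.card_le_card hsub
        have h2 : (Fr.erase x).card = Fr.card - 1 := Finset.card_erase_of_mem hxFr
        omega
      obtain ⟨c1, hc1nn, hc1supp, hc1cov, hc1tot⟩ := IH e1 f hf0 he10 he1f hsum1 hcard1'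
      obtain ⟨c2, hc2nn, hc2supp, hc2cov, hc2tot⟩ := IH e2 f hf0 he20 he2f hsum2 hcard2'
      set θ := t2 / (t1 + t2) with hθdef
      have htsum : 0 < t1 + t2 := by linarith
      have hθ0 : 0 ≤ θ := div_nonneg ht2pos.le htsum.le
      have hθ1 : θ ≤ 1 := by
        rw [hθdef, div_le_one htsum]
        linarith
      have hcomb : ∀ l, θ * e1 l + (1 - θ) * e2 l = e l := by
        intro l
        have h1θ : 1 - θ = t1 / (t1 + t2) := by
          rw [hθdef]
          field_simp
          ring
        simp only [he1def, he2def]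
        by_cases h1 : l = l1
        · subst h1
          rw [if_pos rfl, if_pos rfl, h1θ, hθdef]
          field_simp
          ring
        · by_cases h2 : l = l2
          · subst h2
            rw [if_neg h1, if_pos rfl, if_neg h1, if_pos rfl, h1θ, hθdef]
            field_simp
            ring
          · rw [if_neg h1, if_neg h2, if_neg h1, if_neg h2]
            ring
      refine ⟨fun U => θ * c1 U + (1 - θ) * c2 U, ?_, ?_, ?_, ?_⟩
      · intro U
        show 0 ≤ θ * c1 U + (1 - θ) * c2 U
        have := hc1nn U
        have := hc2nn U
        have h1 : 0 ≤ 1 - θ := by linarith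
        positivity
      · intro U h
        by_cases h1 : c1 U = 0
        · by_cases h2 : c2 U = 0
          · exfalso
            apply h
            show θ * c1 U + (1 - θ) * c2 U = 0
            rw [h1, h2]; ring
          · exact hc2supp U h2
        · exact hc1supp U h1
      · intro l
        calc ∑ U ∈ (OmegaL L α).filter (fun U => l ∈ U), (θ * c1 U + (1 - θ) * c2 U)
            = θ * (∑ U ∈ (OmegaL L α).filter (fun U => l ∈ U), c1 U)
              + (1 - θ) * (∑ U ∈ (OmegaL L α).filter (fun U => l ∈ U), c2 U) := by
              rw [Finset.sum_add_distrib, Finset.mul_sum, Finset.mul_sum]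
          _ = e l := by rw [hc1cov l, hc2cov l]; exact hcomb l
      · calc ∑ U ∈ OmegaL L α, (θ * c1 U + (1 - θ) * c2 U)
            = θ * (∑ U ∈ OmegaL L α, c1 U)
              + (1 - θ) * (∑ U ∈ OmegaL L α, c2 U) := by
              rw [Finset.sum_add_distrib, Finset.mul_sum, Finset.mul_sum]
          _ = f := by rw [hc1tot, hc2tot]; ring

end Hyper


section Flow

variable {L : ℕ}

lemma reindex_pairs (α : ℕ) (g : Finset (Fin L) → Fin L → ℝ) :
    ∑ V ∈ OmegaL L α, ∑ m ∈ Vᶜ, g (insert m V) m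
      = ∑ U ∈ OmegaL L (α+1), ∑ m ∈ U, g U m := by
  classical
  rw [Finset.sum_sigma' (OmegaL L α) (fun V => Vᶜ) (fun V m => g (insert m V) m)]
  rw [Finset.sum_sigma' (OmegaL L (α+1)) (fun U => U) (fun U m => g U m)]
  apply Finset.sum_nbij' (i := fun p : (_ : Finset (Fin L)) × Fin L => (⟨insert p.2 p.1, p.2⟩ : (_ : Finset (Fin L)) × Fin L))
    (j := fun p : (_ : Finset (Fin L)) × Fin L => (⟨p.1.erase p.2, p.2⟩ : (_ : Finset (Fin L)) × Fin L))
  · rintro ⟨V, m⟩ hp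
    rw [Finset.mem_sigma] at hp
    obtain ⟨hV, hm⟩ := hp
    have hmV : m ∉ V := Finset.mem_compl.mp hm
    rw [Finset.mem_sigma]
    constructor
    · refine Finset.mem_powersetCard.mpr ⟨Finset.subset_univ _, ?_⟩
      show (insert m V).card = α + 1
      rw [Finset.card_insert_of_notMem hmV, (Finset.mem_powersetCard.mp hV).2]
    · exact Finset.mem_insert_self _ _
  · rintro ⟨U, m⟩ hp
    rw [Finset.mem_sigma] at hp
    obtain ⟨hU, hm⟩ := hp
    rw [Finset.mem_sigma]
    constructor
    · refine Finset.mem_powersetCard.mpr ⟨Finset.subset_univ _, ?_⟩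
      show (U.erase m).card = α
      rw [Finset.card_erase_of_mem hm, (Finset.mem_powersetCard.mp hU).2]
      omega
    · exact Finset.mem_compl.mpr (Finset.notMem_erase _ _)
  · rintro ⟨V, m⟩ hp
    rw [Finset.mem_sigma] at hp
    have hmV : m ∉ V := Finset.mem_compl.mp hp.2
    simp [Finset.erase_insert hmV]
  · rintro ⟨U, m⟩ hp
    rw [Finset.mem_sigma] at hp
    simp [Finset.insert_erase hp.2]
  · rintro ⟨V, m⟩ hp
    rfl

lemma reindex_pairs_cov (α : ℕ) (l : Fin L) (g : Finset (Fin L) → Fin L → ℝ) :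
    ∑ V ∈ (OmegaL L α).filter (fun V => l ∈ V), ∑ m ∈ Vᶜ, g (insert m V) m
      = ∑ U ∈ (OmegaL L (α+1)).filter (fun U => l ∈ U), ∑ m ∈ U.erase l, g U m := by
  classical
  rw [Finset.sum_sigma' ((OmegaL L α).filter (fun V => l ∈ V)) (fun V => Vᶜ)
    (fun V m => g (insert m V) m)]
  rw [Finset.sum_sigma' ((OmegaL L (α+1)).filter (fun U => l ∈ U)) (fun U => U.erase l)
    (fun U m => g U m)]
  apply Finset.sum_nbij' (i := fun p : (_ : Finset (Fin L)) × Fin L => (⟨insert p.2 p.1, p.2⟩ : (_ : Finset (Fin L)) × Fin L))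
    (j := fun p : (_ : Finset (Fin L)) × Fin L => (⟨p.1.erase p.2, p.2⟩ : (_ : Finset (Fin L)) × Fin L))
  · rintro ⟨V, m⟩ hp
    rw [Finset.mem_sigma] at hp
    obtain ⟨hV, hm⟩ := hp
    rw [Finset.mem_filter] at hV
    have hmV : m ∉ V := Finset.mem_compl.mp hm
    have hml : m ≠ l := fun h => hmV (h ▸ hV.2)
    rw [Finset.mem_sigma, Finset.mem_filter]
    refine ⟨⟨?_, Finset.mem_insert_of_mem hV.2⟩, ?_⟩
    · refine Finset.mem_powersetCard.mpr ⟨Finset.subset_univ _, ?_⟩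
      show (insert m V).card = α + 1
      rw [Finset.card_insert_of_notMem hmV, (Finset.mem_powersetCard.mp hV.1).2]
    · exact Finset.mem_erase.mpr ⟨hml, Finset.mem_insert_self _ _⟩
  · rintro ⟨U, m⟩ hp
    rw [Finset.mem_sigma] at hp
    obtain ⟨hU, hm⟩ := hp
    rw [Finset.mem_filter] at hU
    rw [Finset.mem_erase] at hm
    rw [Finset.mem_sigma, Finset.mem_filter]
    refine ⟨⟨?_, Finset.mem_erase.mpr ⟨Ne.symm hm.1, hU.2⟩⟩, ?_⟩
    · refine Finset.mem_powersetCard.mpr ⟨Finset.subset_univ _, ?_⟩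
      show (U.erase m).card = α
      rw [Finset.card_erase_of_mem hm.2, (Finset.mem_powersetCard.mp hU.1).2]
      omega
    · exact Finset.mem_compl.mpr (Finset.notMem_erase _ _)
  · rintro ⟨V, m⟩ hp
    rw [Finset.mem_sigma] at hp
    have hmV : m ∉ V := Finset.mem_compl.mp hp.2
    simp [Finset.erase_insert hmV]
  · rintro ⟨U, m⟩ hp
    rw [Finset.mem_sigma] at hp
    have hm := Finset.mem_erase.mp hp.2
    simp [Finset.insert_erase hm.2]
  · rintro ⟨V, m⟩ hp
    rfl

lemma flow_step {lam : Fin L → ℝ} (hlam : ∀ l, 0 ≤ lam l) {α : ℕ} (hα : 0 < α)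
    (c : Finset (Fin L) → ℝ)
    (hcnn : ∀ U, 0 ≤ c U) (hcsupp : ∀ U, c U ≠ 0 → U ∈ OmegaL L (α+1))
    (hccov : ∀ l, ∑ U ∈ (OmegaL L (α+1)).filter (fun U => l ∈ U), c U
      = min (lam l) (Fval L lam (α+1)))
    (hctot : ∑ U ∈ OmegaL L (α+1), c U = Fval L lam (α+1))
    (hF' : 0 < Fval L lam (α+1)) :
    ∃ (ν : Finset (Fin L) → ℝ) (w : Finset (Fin L) → Fin L → ℝ),
      (∀ V, 0 ≤ ν V) ∧ (∀ V, ν V ≠ 0 → V ∈ OmegaL L α) ∧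
      (∀ l, ∑ V ∈ (OmegaL L α).filter (fun V => l ∈ V), ν V = min (lam l) (Fval L lam α)) ∧
      (∑ V ∈ OmegaL L α, ν V = Fval L lam α) ∧
      (∀ U m, 0 ≤ w U m) ∧
      (∀ U, ∀ l ∈ U, c U ≤ ∑ m ∈ U.erase l, w U m) ∧
      (∀ H : Finset (Fin L) → ℝ,
        ∑ V ∈ OmegaL L α, ν V * H V
          = ∑ U ∈ OmegaL L (α+1), ∑ m ∈ U, w U m * H (U.erase m)) := by
  classical
  set F' := Fval L lam (α+1) with hF'def
  set Fa := Fval L lam α with hFadef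
  have hFanti : F' ≤ Fa := Fval_anti hlam hα
  set Δ : Fin L → ℝ := fun l => min (lam l) Fa - min (lam l) F' with hΔdef
  set D : ℝ := ∑ l, Δ l with hDdef
  have hΔ0 : ∀ l, 0 ≤ Δ l := by
    intro l
    simp only [hΔdef]
    have := min_le_min (le_refl (lam l)) hFanti
    linarith
  have hΔle : ∀ l, Δ l ≤ Fa - F' := by
    intro l
    simp only [hΔdef]
    rcases le_total (lam l) F' with h | h
    · rw [min_eq_left h, min_eq_left (le_trans h hFanti)]
      linarith
    · rw [min_eq_right h]
      have := min_le_right (lam l) Fa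
      linarith
  have hΔpos_mem : ∀ l, Δ l ≠ 0 → min (lam l) F' = F' := by
    intro l h
    rcases le_total (lam l) F' with hle | hle
    · exfalso
      apply h
      simp only [hΔdef]
      rw [min_eq_left hle, min_eq_left (le_trans hle hFanti)]
      ring
    · exact min_eq_right hle
  have hD : D = (α : ℝ) * Fa - ((α : ℝ) + 1) * F' := by
    rw [hDdef]
    have h1 : ∑ l, Δ l = (∑ l, min (lam l) Fa) - ∑ l, min (lam l) F' := by
      rw [← Finset.sum_sub_distrib]
    rw [h1, hFadef, hF'def, Fval_min_sum hlam hα, Fval_min_sum hlam (by omega)]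
    push_cast
    ring
  have hD0 : 0 ≤ D := Finset.sum_nonneg fun l _ => hΔ0 l
  -- support of large coordinates
  have hsupport : ∀ U, c U ≠ 0 → ∀ l, Δ l ≠ 0 → l ∈ U := by
    intro U hU l hl
    by_contra hlU
    have hdl : min (lam l) F' = F' := hΔpos_mem l hl
    have hsub : (OmegaL L (α+1)).filter (fun U' => l ∈ U') ⊆ (OmegaL L (α+1)).erase U := by
      intro U' hU'
      rw [Finset.mem_filter] at hU'
      rw [Finset.mem_erase]
      refine ⟨?_, hU'.1⟩
      intro h
      subst h
      exact hlU hU'.2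
    have h1 : ∑ U' ∈ (OmegaL L (α+1)).filter (fun U' => l ∈ U'), c U'
        ≤ ∑ U' ∈ (OmegaL L (α+1)).erase U, c U' :=
      Finset.sum_le_sum_of_subset_of_nonneg hsub (fun U' _ _ => hcnn U')
    have h2 : ∑ U' ∈ (OmegaL L (α+1)).erase U, c U'
        = F' - c U := by
      rw [Finset.sum_erase_eq_sub (hcsupp U hU), hctot]
    rw [hccov l, hdl] at h1
    rw [h2] at h1
    have hcUpos : 0 < c U := lt_of_le_of_ne (hcnn U) (Ne.symm hU)
    linarith
  have hαF' : (0 : ℝ) < (α : ℝ) * F' := by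
    apply mul_pos _ hF'
    exact_mod_cast hα
  set w : Finset (Fin L) → Fin L → ℝ :=
    fun U m => c U * ((F' + D - (α : ℝ) * Δ m) / ((α : ℝ) * F')) with hwdef
  have hnum_nn : ∀ m, 0 ≤ F' + D - (α : ℝ) * Δ m := by
    intro m
    have h1 := hΔle m
    have h2 : (α : ℝ) * Δ m ≤ (α : ℝ) * (Fa - F') :=
      mul_le_mul_of_nonneg_left h1 (by positivity)
    rw [hD]
    nlinarith
  have hwnn : ∀ U m, 0 ≤ w U m := by
    intro U m
    simp only [hwdef]
    exact mul_nonneg (hcnn U) (div_nonneg (hnum_nn m) hαF'.le)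
  -- the per-U sums
  have hΔsum : ∀ U, c U ≠ 0 → ∑ m ∈ U, Δ m = D := by
    intro U hU
    rw [hDdef]
    apply Finset.sum_subset (Finset.subset_univ U)
    intro l _ hl
    by_contra h
    exact hl (hsupport U hU l h)
  have hWU : ∀ U, ∑ m ∈ U, w U m = c U * ((((α : ℝ) + 1) * F' + D) / ((α : ℝ) * F')) := by
    intro U
    by_cases hU : c U = 0
    · simp [hwdef, hU]
    · have hcard : U.card = α + 1 := (Finset.mem_powersetCard.mp (hcsupp U hU)).2
      simp only [hwdef]
      rw [← Finset.mul_sum, ← Finset.sum_div]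
      have hnum : ∑ x ∈ U, (F' + D - (α : ℝ) * Δ x) = ((α : ℝ) + 1) * F' + D := by
        rw [Finset.sum_sub_distrib, Finset.sum_const, nsmul_eq_mul, ← Finset.mul_sum,
          hΔsum U hU, hcard]
        push_cast
        ring
      rw [hnum]
  have hserase : ∀ U, ∀ l ∈ U, ∑ m ∈ U.erase l, w U m = c U * ((F' + Δ l) / F') := by
    intro U l hl
    rw [Finset.sum_erase_eq_sub hl, hWU U]
    simp only [hwdef]
    field_simp
    ring
  have hshear : ∀ U, ∀ l ∈ U, c U ≤ ∑ m ∈ U.erase l, w U m := by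
    intro U l hl
    rw [hserase U l hl]
    have hexp : c U * ((F' + Δ l) / F') = c U + c U * (Δ l / F') := by
      field_simp
    rw [hexp]
    have : 0 ≤ c U * (Δ l / F') :=
      mul_nonneg (hcnn U) (div_nonneg (hΔ0 l) hF'.le)
    linarith
  set ν : Finset (Fin L) → ℝ :=
    fun V => if V ∈ OmegaL L α then ∑ m ∈ Vᶜ, w (insert m V) m else 0 with hνdef
  have hνval : ∀ V ∈ OmegaL L α, ν V = ∑ m ∈ Vᶜ, w (insert m V) m := by
    intro V hV
    simp only [hνdef, if_pos hV]
  have hgen : ∀ H : Finset (Fin L) → ℝ,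
      ∑ V ∈ OmegaL L α, ν V * H V
        = ∑ U ∈ OmegaL L (α+1), ∑ m ∈ U, w U m * H (U.erase m) := by
    intro H
    have h1 : ∀ V ∈ OmegaL L α, ν V * H V
        = ∑ m ∈ Vᶜ, w (insert m V) m * H ((insert m V).erase m) := by
      intro V hV
      rw [hνval V hV, Finset.sum_mul]
      apply Finset.sum_congr rfl
      intro m hm
      rw [Finset.erase_insert (Finset.mem_compl.mp hm)]
    rw [Finset.sum_congr rfl h1]
    exact reindex_pairs α (fun U m => w U m * H (U.erase m))
  have htot : ∑ V ∈ OmegaL L α, ν V = Fa := by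
    have h := hgen (fun _ => 1)
    simp only [mul_one] at h
    rw [h, Finset.sum_congr rfl (fun U (_ : U ∈ OmegaL L (α+1)) => hWU U),
      ← Finset.sum_mul, hctot, hD]
    field_simp
    ring
  have hcov : ∀ l, ∑ V ∈ (OmegaL L α).filter (fun V => l ∈ V), ν V
      = min (lam l) Fa := by
    intro l
    have h0 : ∀ V ∈ (OmegaL L α).filter (fun V => l ∈ V),
        ν V = ∑ m ∈ Vᶜ, w (insert m V) m := by
      intro V hV
      exact hνval V (Finset.mem_filter.mp hV).1
    rw [Finset.sum_congr rfl h0, reindex_pairs_cov α l w]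
    rw [Finset.sum_congr rfl
      (fun U hU => hserase U l (Finset.mem_filter.mp hU).2)]
    rw [← Finset.sum_mul, hccov l]
    by_cases hΔl : Δ l = 0
    · have hmm : min (lam l) Fa = min (lam l) F' := by
        have : min (lam l) Fa - min (lam l) F' = 0 := hΔl
        linarith
      rw [hΔl, hmm]
      field_simp
      ring
    · have hF'eq : min (lam l) F' = F' := hΔpos_mem l hΔl
      have hmm : min (lam l) Fa = F' + Δ l := by
        have : Δ l = min (lam l) Fa - min (lam l) F' := rfl
        rw [hF'eq] at this
        linarith
      rw [hF'eq, hmm]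
      field_simp
  refine ⟨ν, w, ?_, ?_, hcov, htot, hwnn, hshear, hgen⟩
  · intro V
    simp only [hνdef]
    split
    · exact Finset.sum_nonneg fun m _ => hwnn _ _
    · exact le_rfl
  · intro V h
    by_contra hV
    apply h
    simp only [hνdef, if_neg hV]

end Flow



section Assembly

variable {L : ℕ}

def InvYZ (L : ℕ) (lam : Fin L → ℝ) (α : ℕ) (c : Finset (Fin L) → ℝ) : Prop :=
  (∀ U, 0 ≤ c U) ∧ (∀ U, c U ≠ 0 → U ∈ OmegaL L α) ∧
  (∀ l, ∑ U ∈ (OmegaL L α).filter (fun U => l ∈ U), c U = min (lam l) (Fval L lam α)) ∧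
  (∑ U ∈ OmegaL L α, c U = Fval L lam α)

def EntIneq (L : ℕ) (α : ℕ) (cl cu : Finset (Fin L) → ℝ) : Prop :=
  ∀ (Ωt : Type) [MeasurableSpace Ωt] (μ : Measure Ωt) [IsProbabilityMeasure μ]
    (S : Fin L → Type) [∀ l, Fintype (S l)] [∀ l, MeasurableSpace (S l)]
    [∀ l, MeasurableSingletonClass (S l)]
    (X : ∀ l, Ωt → S l), (∀ l, Measurable (X l)) →
    ∑ V ∈ OmegaL L α, cl V * entHset μ X V
      ≥ ∑ U ∈ OmegaL L (α+1), cu U * entHset μ X U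

lemma fresh_exists (lam : Fin L → ℝ) (hlam : ∀ l, 0 ≤ lam l) {α : ℕ}
    (hα : 0 < α) (hαL : α ≤ L) : ∃ c, InvYZ L lam α c := by
  obtain ⟨c, h0, h1, h2, h3⟩ := hypersimplex α hα hαL L
    (fun l => min (lam l) (Fval L lam α)) (Fval L lam α)
    (Fval_nonneg hlam α) (fun l => le_min (hlam l) (Fval_nonneg hlam α))
    (fun l => min_le_right _ _) (Fval_min_sum hlam hα)
    (le_trans (Finset.card_le_univ _) (by simp))
  exact ⟨c, h0, h1, h2, h3⟩

lemma chain (lam : Fin L → ℝ) (hlam : ∀ l, 0 ≤ lam l) (hL : 1 ≤ L) :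
    ∀ k : ℕ, ∃ cs : ℕ → Finset (Fin L) → ℝ,
      (∀ β, 1 ≤ β → β ≤ L → L ≤ β + k → InvYZ L lam β (cs β)) ∧
      (∀ β, 1 ≤ β → β + 1 ≤ L → L ≤ β + k → EntIneq L β (cs β) (cs (β+1))) := by
  intro k
  induction k with
  | zero =>
    obtain ⟨cL, hcL⟩ := fresh_exists lam hlam (α := L) (by omega) le_rfl
    refine ⟨fun _ => cL, ?_, ?_⟩
    · intro β h1 h2 h3
      have hβL : β = L := by omega
      subst hβL
      exact hcL
    · intro β h1 h2 h3
      omega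
  | succ k IH =>
    obtain ⟨cs, hInv, hEnt⟩ := IH
    by_cases hcase : L ≤ k + 1
    · refine ⟨cs, ?_, ?_⟩
      · intro β h1 h2 h3; exact hInv β h1 h2 (by omega)
      · intro β h1 h2 h3; exact hEnt β h1 h2 (by omega)
    · push_neg at hcase
      set β0 := L - k - 1 with hβ0
      have hβ01 : 1 ≤ β0 := by omega
      have hβ0L : β0 + 1 ≤ L := by omega
      obtain ⟨hnn, hsupp, hcov, htot⟩ := hInv (β0+1) (by omega) hβ0L (by omega)
      by_cases hF : 0 < Fval L lam (β0+1)
      · obtain ⟨ν, w, hν0, hνsupp, hνcov, hνtot, hw0, hshear, hgen⟩ :=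
          flow_step hlam hβ01 (cs (β0+1)) hnn hsupp hcov htot hF
        refine ⟨fun β => if β = β0 then ν else cs β, ?_, ?_⟩
        · intro β h1 h2 h3
          by_cases hβ : β = β0
          · subst hβ
            simp only [if_pos rfl]
            exact ⟨hν0, hνsupp, hνcov, hνtot⟩
          · simp only [if_neg hβ]
            exact hInv β h1 h2 (by omega)
        · intro β h1 h2 h3
          by_cases hβ : β = β0
          · subst hβ
            simp only [if_pos rfl, if_neg (show ¬ β0 + 1 = β0 by omega)]
            intro Ωt _ μ _ S _ _ _ X hX
            show (∑ V ∈ OmegaL L β0, ν V * entHset μ X V)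
              ≥ ∑ U ∈ OmegaL L (β0+1), cs (β0+1) U * entHset μ X U
            rw [hgen (entHset μ X)]
            apply Finset.sum_le_sum
            intro U hU
            have hUne : U.Nonempty := by
              have := (Finset.mem_powersetCard.mp hU).2
              exact Finset.card_pos.mp (by omega)
            exact entHset_weighted_han' μ X hX U hUne (w U) (fun m _ => hw0 U m)
              (cs (β0+1) U) (fun l hl => hshear U l hl)
          · simp only [if_neg hβ, if_neg (show ¬ β + 1 = β0 by omega)]
            exact hEnt β h1 h2 (by omega)
      · have hF0 : Fval L lam (β0+1) = 0 :=
          le_antisymm (not_lt.mp hF) (Fval_nonneg hlam _)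
        have hzero : ∀ U ∈ OmegaL L (β0+1), cs (β0+1) U = 0 := by
          have h := htot
          rw [hF0] at h
          exact (Finset.sum_eq_zero_iff_of_nonneg (fun U _ => hnn U)).mp h
        obtain ⟨c0, hc0⟩ := fresh_exists lam hlam hβ01 (by omega)
        refine ⟨fun β => if β = β0 then c0 else cs β, ?_, ?_⟩
        · intro β h1 h2 h3
          by_cases hβ : β = β0
          · subst hβ; simp only [if_pos rfl]; exact hc0
          · simp only [if_neg hβ]; exact hInv β h1 h2 (by omega)
        · intro β h1 h2 h3
          by_cases hβ : β = β0
          · subst hβ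
            simp only [if_pos rfl, if_neg (show ¬ β0 + 1 = β0 by omega)]
            intro Ωt _ μ _ S _ _ _ X hX
            show (∑ V ∈ OmegaL L β0, c0 V * entHset μ X V)
              ≥ ∑ U ∈ OmegaL L (β0+1), cs (β0+1) U * entHset μ X U
            have hRHS : ∑ U ∈ OmegaL L (β0+1), cs (β0+1) U * entHset μ X U = 0 := by
              apply Finset.sum_eq_zero
              intro U hU
              rw [hzero U hU, zero_mul]
            rw [hRHS]
            apply Finset.sum_nonneg
            intro V _
            exact mul_nonneg (hc0.1 V) (entHset_nonneg μ X V)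
          · simp only [if_neg hβ, if_neg (show ¬ β + 1 = β0 by omega)]
            exact hEnt β h1 h2 (by omega)

end Assembly


/-- **Subset entropy inequality of Yeung and Zhang** (Theorem 2): there is a nonnegative
weight function `c_λ` on subsets such that its restriction to each `Ω_L^{(α)}` is an optimal
solution of the linear program defining `f_α(λ)`, and the weighted subset entropy sums are
monotone along `α`. -/
theorem yeung_zhang_subset_entropy_inequality
    {L : ℕ} (hL : 1 ≤ L) (lam : Fin L → ℝ) (hlam : ∀ l, 0 ≤ lam l) :
    ∃ c : Finset (Fin L) → ℝ,
      (∀ α ∈ Finset.Icc 1 L, IsOptimal L lam α c) ∧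
      (∀ α ∈ Finset.Icc 2 L,
        ∀ (Ω : Type) [MeasurableSpace Ω] (μ : Measure Ω) [IsProbabilityMeasure μ]
          (S : Fin L → Type) [∀ l, Fintype (S l)] [∀ l, MeasurableSpace (S l)]
          [∀ l, MeasurableSingletonClass (S l)]
          (X : ∀ l, Ω → S l), (∀ l, Measurable (X l)) →
          ∑ V ∈ OmegaL L (α - 1), c V * entHset μ X V ≥
            ∑ U ∈ OmegaL L α, c U * entHset μ X U) := by
  classical
  obtain ⟨cs, hInv, hEnt⟩ := chain lam hlam hL L
  refine ⟨fun U => cs U.card U, ?_, ?_⟩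
  · intro α hα
    rw [Finset.mem_Icc] at hα
    obtain ⟨hInv1, hInv2, hInv3, hInv4⟩ := hInv α hα.1 hα.2 (by omega)
    have hrw : ∀ s : Finset (Finset (Fin L)), s ⊆ OmegaL L α →
        ∑ U ∈ s, cs U.card U = ∑ U ∈ s, cs α U := by
      intro s hs
      apply Finset.sum_congr rfl
      intro U hU
      rw [(Finset.mem_powersetCard.mp (hs hU)).2]
    refine ⟨?_, ?_, ?_⟩
    · intro U hU
      show 0 ≤ cs U.card U
      rw [(Finset.mem_powersetCard.mp hU).2]
      exact hInv1 U
    · intro l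
      show ∑ U ∈ (OmegaL L α).filter (fun U => l ∈ U), cs U.card U ≤ lam l
      rw [hrw _ (Finset.filter_subset _ _), hInv3 l]
      exact min_le_left _ _
    · show ∑ U ∈ OmegaL L α, cs U.card U = fLP L lam α
      rw [hrw _ (Finset.Subset.refl _), hInv4]
      symm
      apply fLP_eq_Fval hlam (by omega) (cs α) (fun U _ => hInv1 U)
        (fun l => by rw [hInv3 l]; exact min_le_left _ _) hInv4
  · intro α hα
    rw [Finset.mem_Icc] at hα
    intro Ωt _ μ _ S _ _ _ X hX
    have hβeq : α - 1 + 1 = α := by omega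
    have h := hEnt (α-1) (by omega) (by omega) (by omega) Ωt μ S X hX
    rw [hβeq] at h
    show ∑ V ∈ OmegaL L (α-1), cs V.card V * entHset μ X V
      ≥ ∑ U ∈ OmegaL L α, cs U.card U * entHset μ X U
    have h1 : ∑ V ∈ OmegaL L (α-1), cs V.card V * entHset μ X V
        = ∑ V ∈ OmegaL L (α-1), cs (α-1) V * entHset μ X V := by
      apply Finset.sum_congr rfl
      intro V hV
      rw [(Finset.mem_powersetCard.mp hV).2]
    have h2 : ∑ U ∈ OmegaL L α, cs U.card U * entHset μ X U
        = ∑ U ∈ OmegaL L α, cs α U * entHset μ X U := by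
      apply Finset.sum_congr rfl
      intro U hU
      rw [(Finset.mem_powersetCard.mp hU).2]
    rw [h1, h2]
    exact h
end

section
/- Linear programming result of Yeung and Zhang (Theorem 5): Let L ≥ 2, λ = (λ_1,…,λ_L) with all λ_l ≥ 0, and α ∈ {2,…,L}. Let c_λ^{(α)} : Ω_L^{(α)} → ℝ≥0 be any optimal solution of the linear program defining f_α(λ), and suppose the optimal value f_α(λ) > 0. Then there exists a collection of functions {g_U : U ∈ Ω_L^{(α)}}, where each g_U is a fractional cover of the hypergraph (U, 𝒱_U) with 𝒱_U the collection of all (α−1)-element subsets of U, such that the function c_λ^{(α−1)} : Ω_L^{(α−1)} → ℝ≥0 defined by c_λ(V) := ∑_{U ∈ Ω_L^{(α)}, U ⊇ V} g_U(V) c_λ(U) is an optimal solution of the linear program defining f_{α−1}(λ). -/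
open Finset

lemma mem_OmegaL {L β : ℕ} {V : Finset (Fin L)} : V ∈ OmegaL L β ↔ V.card = β := by
  simp [OmegaL, Finset.mem_powersetCard, Finset.subset_univ]

section Water

variable {L : ℕ} (lam : Fin L → ℝ) (β : ℕ)

/-- double counting: summing loads over all nodes equals β times the total mass. -/
lemma yz_double_count (c : Finset (Fin L) → ℝ) :
    ∑ l : Fin L, ∑ V ∈ (OmegaL L β).filter (fun V => l ∈ V), c V
      = (β : ℝ) * ∑ V ∈ OmegaL L β, c V := by
  have h1 : ∀ l : Fin L, ∑ V ∈ (OmegaL L β).filter (fun V => l ∈ V), c V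
      = ∑ V ∈ OmegaL L β, if l ∈ V then c V else 0 := fun l => by
    rw [Finset.sum_filter]
  simp_rw [h1]
  rw [Finset.sum_comm]
  rw [Finset.mul_sum]
  refine Finset.sum_congr rfl (fun V hV => ?_)
  have hcard : V.card = β := (Finset.mem_powersetCard.1 hV).2
  have : ∑ l : Fin L, (if l ∈ V then c V else 0) = ∑ l ∈ V, c V := by
    rw [Finset.sum_ite_mem]
    congr 1
    exact Finset.univ_inter V
  rw [this, Finset.sum_const, hcard, nsmul_eq_mul]

/-- the water-level set -/
def waterSet : Set ℝ := { x : ℝ | 0 ≤ x ∧ (β : ℝ) * x ≤ ∑ l : Fin L, min (lam l) x }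

noncomputable def wlev : ℝ := sSup (waterSet lam β)

variable (hlam : ∀ l, 0 ≤ lam l) (hβ : 1 ≤ β)

include hlam in
lemma zero_mem_waterSet : (0 : ℝ) ∈ waterSet lam β := by
  constructor
  · rfl
  · simp only [mul_zero]
    apply Finset.sum_nonneg
    intro l _
    exact le_min (hlam l) le_rfl

include hβ in
lemma waterSet_bddAbove : BddAbove (waterSet lam β) := by
  refine ⟨∑ l, lam l, fun x hx => ?_⟩
  obtain ⟨hx0, hxs⟩ := hx
  calc x = 1 * x := (one_mul x).symm
    _ ≤ (β : ℝ) * x := by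
        apply mul_le_mul_of_nonneg_right _ hx0
        exact_mod_cast hβ
    _ ≤ ∑ l, min (lam l) x := hxs
    _ ≤ ∑ l, lam l := Finset.sum_le_sum (fun l _ => min_le_left _ _)

include hlam hβ in
lemma wlev_nonneg : 0 ≤ wlev lam β :=
  le_csSup (waterSet_bddAbove lam β hβ) (zero_mem_waterSet lam β hlam)

include hlam hβ in
lemma wlev_mem : wlev lam β ∈ waterSet lam β := by
  have hne : (waterSet lam β).Nonempty := ⟨0, zero_mem_waterSet lam β hlam⟩
  have hw0 : 0 ≤ wlev lam β := wlev_nonneg lam β hlam hβ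
  have hβpos : (0 : ℝ) < β := by exact_mod_cast hβ
  refine ⟨hw0, ?_⟩
  have key : ∀ x ∈ waterSet lam β, x ≤ (∑ l, min (lam l) (wlev lam β)) / β := by
    intro x hx
    obtain ⟨hx0, hxs⟩ := hx
    have hxw : x ≤ wlev lam β := le_csSup (waterSet_bddAbove lam β hβ) ⟨hx0, hxs⟩
    rw [le_div_iff₀ hβpos, mul_comm]
    calc (β : ℝ) * x ≤ ∑ l, min (lam l) x := hxs
      _ ≤ ∑ l, min (lam l) (wlev lam β) :=
          Finset.sum_le_sum (fun l _ => min_le_min le_rfl hxw)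
  have := csSup_le hne key
  calc (β : ℝ) * wlev lam β ≤ β * ((∑ l, min (lam l) (wlev lam β)) / β) := by
        exact mul_le_mul_of_nonneg_left this (le_of_lt hβpos)
    _ = ∑ l, min (lam l) (wlev lam β) := by field_simp

include hlam hβ in
lemma wlev_eq : (β : ℝ) * wlev lam β = ∑ l : Fin L, min (lam l) (wlev lam β) := by
  have hβpos : (0 : ℝ) < β := by exact_mod_cast hβ
  have hle := (wlev_mem lam β hlam hβ).2
  rcases eq_or_lt_of_le hle with h | h
  · exact h
  · exfalso
    set w := wlev lam β with hw
    set g := (∑ l, min (lam l) w) - β * w with hg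
    have hgpos : 0 < g := by rw [hg]; linarith
    have hmem : w + g / β ∈ waterSet lam β := by
      constructor
      · have : 0 ≤ g / β := le_of_lt (div_pos hgpos hβpos)
        have := wlev_nonneg lam β hlam hβ
        linarith
      · have h2 : (β : ℝ) * (w + g / β) = β * w + g := by field_simp
        rw [h2]
        have h3 : (β : ℝ) * w + g = ∑ l, min (lam l) w := by simp [hg]
        rw [h3]
        apply Finset.sum_le_sum
        intro l _
        apply min_le_min le_rfl
        have : 0 < g / β := div_pos hgpos hβpos
        linarith
    have : w + g / β ≤ w := le_csSup (waterSet_bddAbove lam β hβ) hmem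
    have : 0 < g / β := div_pos hgpos hβpos
    linarith

include hβ in
lemma le_wlev {x : ℝ} (hx0 : 0 ≤ x) (hxs : (β:ℝ) * x ≤ ∑ l : Fin L, min (lam l) x) :
    x ≤ wlev lam β :=
  le_csSup (waterSet_bddAbove lam β hβ) ⟨hx0, hxs⟩

include hβ in
lemma feasible_le_wlev (c : Finset (Fin L) → ℝ)
    (hpos : ∀ U ∈ OmegaL L β, 0 ≤ c U)
    (hfeas : ∀ l : Fin L, ∑ U ∈ (OmegaL L β).filter (fun U => l ∈ U), c U ≤ lam l) :
    ∑ V ∈ OmegaL L β, c V ≤ wlev lam β := by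
  set x := ∑ V ∈ OmegaL L β, c V with hx
  have hx0 : 0 ≤ x := Finset.sum_nonneg hpos
  apply le_wlev lam β hβ hx0
  rw [← yz_double_count β c]
  apply Finset.sum_le_sum
  intro l _
  apply le_min (hfeas l)
  apply Finset.sum_le_sum_of_subset_of_nonneg (Finset.filter_subset _ _)
  intro U hU _
  exact hpos U hU

end Water
section Builder

open Finset

variable {L : ℕ}

/-- lifting a sum over (β-1)-sets to β-sets containing l₀ -/
lemma yz_lift_sum {β : ℕ} (hβ : 1 ≤ β) (l₀ : Fin L) (e₁ : Finset (Fin L) → ℝ)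
    (hsupp : ∀ W, e₁ W ≠ 0 → l₀ ∉ W) (q : Finset (Fin L) → Prop) [DecidablePred q]
    (hq : ∀ W, l₀ ∉ W → (q (insert l₀ W) ↔ q W)) :
    ∑ V ∈ (OmegaL L β).filter (fun V => l₀ ∈ V ∧ q V), e₁ (V.erase l₀)
      = ∑ W ∈ (OmegaL L (β-1)).filter (fun W => q W), e₁ W := by
  have step1 : ∑ V ∈ (OmegaL L β).filter (fun V => l₀ ∈ V ∧ q V), e₁ (V.erase l₀)
      = ∑ W ∈ (OmegaL L (β-1)).filter (fun W => l₀ ∉ W ∧ q W), e₁ W := by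
    refine Finset.sum_nbij' (fun V => V.erase l₀) (fun W => insert l₀ W) ?_ ?_ ?_ ?_ ?_
    · intro V hV
      rw [Finset.mem_filter] at hV ⊢
      obtain ⟨hVΩ, hl₀V, hqV⟩ := hV
      rw [mem_OmegaL] at hVΩ
      refine ⟨mem_OmegaL.2 ?_, Finset.notMem_erase _ _, ?_⟩
      · rw [Finset.card_erase_of_mem hl₀V, hVΩ]
      · have h1 : insert l₀ (V.erase l₀) = V := Finset.insert_erase hl₀V
        have := hq (V.erase l₀) (Finset.notMem_erase _ _)
        rw [h1] at this
        exact this.1 hqV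
    · intro W hW
      rw [Finset.mem_filter] at hW ⊢
      obtain ⟨hWΩ, hl₀W, hqW⟩ := hW
      rw [mem_OmegaL] at hWΩ
      refine ⟨mem_OmegaL.2 ?_, Finset.mem_insert_self _ _, (hq W hl₀W).2 hqW⟩
      rw [Finset.card_insert_of_notMem hl₀W, hWΩ]
      omega
    · intro V hV
      rw [Finset.mem_filter] at hV
      exact Finset.insert_erase hV.2.1
    · intro W hW
      rw [Finset.mem_filter] at hW
      exact Finset.erase_insert hW.2.1
    · intro V _
      rfl
  rw [step1]
  apply Finset.sum_subset
  · intro W hW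
    rw [Finset.mem_filter] at hW ⊢
    exact ⟨hW.1, hW.2.2⟩
  · intro W hW hW'
    by_contra hne
    have hl₀W : l₀ ∉ W := hsupp W hne
    rw [Finset.mem_filter] at hW hW'
    exact hW' ⟨hW.1, hl₀W, hW.2⟩

lemma yz_builder (n : ℕ) :
    ∀ (G : Finset (Fin L)) (β : ℕ) (P : Fin L → ℝ) (t : ℝ),
    G.card = n → 1 ≤ β → β ≤ G.card →
    (∀ l, 0 ≤ P l) → (∀ l, P l ≤ t) → (∀ l, l ∉ G → P l = 0) →
    (∑ l ∈ G, P l = (β:ℝ) * t) →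
    ∃ e : Finset (Fin L) → ℝ,
      (∀ V, 0 ≤ e V) ∧
      (∀ V, e V ≠ 0 → V ⊆ G ∧ V.card = β) ∧
      (∀ l : Fin L, ∑ V ∈ (OmegaL L β).filter (fun V => l ∈ V), e V = P l) ∧
      (∑ V ∈ OmegaL L β, e V = t) := by
  induction n with
  | zero =>
    intro G β P t hGn hβ1 hβG _ _ _ _
    omega
  | succ n ih =>
    intro G β P t hGn hβ1 hβG hP0 hPt hPout hPsum
    classical
    have hβpos : (0:ℝ) < β := by exact_mod_cast hβ1
    by_cases hA : β = G.card
    · -- case A : β = |G|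
      have ht0 : 0 ≤ t := by
        have h1 : 0 ≤ (β:ℝ) * t := hPsum ▸ Finset.sum_nonneg (fun l _ => hP0 l)
        nlinarith
      have hGΩ : G ∈ OmegaL L β := mem_OmegaL.2 hA.symm
      have hPeq : ∀ l ∈ G, P l = t := by
        have hsum0 : ∑ l ∈ G, (t - P l) = 0 := by
          rw [Finset.sum_sub_distrib, hPsum, Finset.sum_const, nsmul_eq_mul, ← hA]
          ring
        intro l hl
        have h1 : ∀ l ∈ G, 0 ≤ t - P l := fun l _ => sub_nonneg.2 (hPt l)
        have := (Finset.sum_eq_zero_iff_of_nonneg h1).1 hsum0 l hl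
        linarith
      refine ⟨fun V => if V = G then t else 0, ?_, ?_, ?_, ?_⟩
      · intro V; dsimp only; split <;> simp [ht0]
      · intro V hV
        have hVG : V = G := by by_contra h; simp [h] at hV
        subst hVG
        exact ⟨Finset.Subset.refl _, hA.symm⟩
      · intro l
        by_cases hl : l ∈ G
        · have hGmem : G ∈ (OmegaL L β).filter (fun V => l ∈ V) :=
            Finset.mem_filter.2 ⟨hGΩ, hl⟩
          rw [Finset.sum_eq_single_of_mem G hGmem]
          · simp [hPeq l hl]
          · intro V _ hne; simp [hne]
        · rw [hPout l hl]
          apply Finset.sum_eq_zero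
          intro V hV
          rw [Finset.mem_filter] at hV
          have : V ≠ G := fun h => hl (h ▸ hV.2)
          simp [this]
      · rw [Finset.sum_eq_single_of_mem G hGΩ]
        · simp
        · intro V _ hne; simp [hne]
    · by_cases hB : β = 1
      · -- case B : β = 1
        subst hB
        refine ⟨fun V => ∑ l ∈ G, if V = {l} then P l else 0, ?_, ?_, ?_, ?_⟩
        · intro V
          apply Finset.sum_nonneg
          intro l _
          split
          · exact hP0 l
          · rfl
        · intro V hV
          obtain ⟨l, hlG, hterm⟩ := Finset.exists_ne_zero_of_sum_ne_zero hV
          have hVl : V = {l} := by by_contra h; simp [h] at hterm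
          subst hVl
          exact ⟨Finset.singleton_subset_iff.2 hlG, Finset.card_singleton l⟩
        · intro l
          have hfilter : (OmegaL L 1).filter (fun V => l ∈ V) = {({l} : Finset (Fin L))} := by
            ext V
            simp only [Finset.mem_filter, Finset.mem_singleton, OmegaL,
              Finset.mem_powersetCard, Finset.card_eq_one]
            constructor
            · rintro ⟨⟨-, a, rfl⟩, hm⟩
              rw [Finset.mem_singleton] at hm
              rw [hm]
            · rintro rfl
              exact ⟨⟨Finset.subset_univ _, ⟨l, rfl⟩⟩, Finset.mem_singleton_self l⟩
          rw [hfilter, Finset.sum_singleton]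
          have hcongr : ∀ l' ∈ G, (if ({l} : Finset (Fin L)) = {l'} then P l' else 0)
              = if l' = l then P l' else 0 := by
            intro l' _
            refine if_congr ?_ rfl rfl
            rw [Finset.singleton_inj]
            exact eq_comm
          rw [Finset.sum_congr rfl hcongr, Finset.sum_ite_eq' G l P]
          by_cases hl : l ∈ G
          · simp [hl]
          · simp [hl, hPout l hl]
        · rw [Finset.sum_comm]
          have : ∀ l ∈ G, ∑ V ∈ OmegaL L 1, (if V = {l} then P l else 0) = P l := by
            intro l _
            rw [Finset.sum_ite_eq' (OmegaL L 1) ({l} : Finset (Fin L)) (fun _ => P l)]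
            exact if_pos (mem_OmegaL.2 (Finset.card_singleton l))
          rw [Finset.sum_congr rfl this]
          rw [hPsum]
          simp
      · -- case C : 2 ≤ β < |G|
        have hβ2 : 2 ≤ β := by omega
        have hβlt : β < G.card := lt_of_le_of_ne hβG hA
        have hGne : G.Nonempty := Finset.card_pos.1 (by omega)
        obtain ⟨l₀, hl₀G, hl₀min⟩ := G.exists_min_image P hGne
        set m := P l₀ with hm
        set G' := G.erase l₀ with hG'
        have hG'card : G'.card = n := by
          rw [hG', Finset.card_erase_of_mem hl₀G, hGn]
          omega
        have hl₀G' : l₀ ∉ G' := Finset.notMem_erase _ _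
        have hm0 : 0 ≤ m := hP0 l₀
        have hmt : m ≤ t := hPt l₀
        have htm : 0 ≤ t - m := by linarith
        have hminle : ∀ l ∈ G', m ≤ P l := fun l hl => hl₀min l (Finset.mem_of_mem_erase hl)
        have hsumG' : ∑ l ∈ G', P l = (β:ℝ) * t - m := by
          have := Finset.add_sum_erase G P hl₀G
          rw [← hG'] at this
          linarith [hPsum, this]
        set ℓf := fun l => if l ∈ G' then max (P l - (t - m)) 0 else 0 with hℓf
        set uf := fun l => if l ∈ G' then m else 0 with huf
        have hℓ0 : ∀ l, 0 ≤ ℓf l := by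
          intro l; rw [hℓf]; dsimp only; split
          · exact le_max_right _ _
          · rfl
        have hℓu : ∀ l, ℓf l ≤ uf l := by
          intro l; rw [hℓf, huf]; dsimp only; split
          · exact max_le (by linarith [hPt l]) hm0
          · rfl
        have husum : ∑ l ∈ G', uf l = (n:ℝ) * m := by
          rw [huf]
          rw [Finset.sum_congr rfl (fun l hl => if_pos hl), Finset.sum_const, nsmul_eq_mul,
            hG'card]
        have hℓsum : ∑ l ∈ G', ℓf l ≤ ((β:ℝ) - 1) * m := by
          have hconv : ∑ l ∈ G', ℓf l
              = ∑ l ∈ G'.filter (fun l => t - m < P l), (P l - (t - m)) := by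
            rw [← Finset.sum_filter_add_sum_filter_not G' (fun l => t - m < P l) ℓf]
            have h2 : ∑ l ∈ G'.filter (fun l => ¬(t - m < P l)), ℓf l = 0 := by
              apply Finset.sum_eq_zero
              intro l hl
              rw [Finset.mem_filter] at hl
              rw [hℓf]; dsimp only
              rw [if_pos hl.1]
              exact max_eq_right (by push_neg at hl; linarith [hl.2])
            have h1 : ∀ l ∈ G'.filter (fun l => t - m < P l), ℓf l = P l - (t - m) := by
              intro l hl
              rw [Finset.mem_filter] at hl
              rw [hℓf]; dsimp only
              rw [if_pos hl.1]
              exact max_eq_left (by linarith [hl.2])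
            rw [Finset.sum_congr rfl h1, h2, add_zero]
          rw [hconv]
          set K := G'.filter (fun l => t - m < P l) with hK
          by_cases hKc : (K.card : ℝ) ≤ (β:ℝ) - 1
          · calc ∑ l ∈ K, (P l - (t - m)) ≤ ∑ _l ∈ K, m :=
                  Finset.sum_le_sum (fun l _ => by linarith [hPt l])
              _ = (K.card : ℝ) * m := by rw [Finset.sum_const, nsmul_eq_mul]
              _ ≤ ((β:ℝ) - 1) * m := mul_le_mul_of_nonneg_right hKc hm0
          · push_neg at hKc
            have hKβ : (β:ℝ) ≤ (K.card : ℝ) := by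
              have : β < K.card + 1 := by exact_mod_cast (by linarith : (β:ℝ) < (K.card:ℝ) + 1)
              exact_mod_cast Nat.lt_succ_iff.1 this
            have hKsub : ∑ l ∈ K, P l ≤ ∑ l ∈ G', P l := by
              apply Finset.sum_le_sum_of_subset_of_nonneg (Finset.filter_subset _ _)
              intro l _ _; exact hP0 l
            calc ∑ l ∈ K, (P l - (t - m))
                = ∑ l ∈ K, P l - (K.card : ℝ) * (t - m) := by
                  rw [Finset.sum_sub_distrib, Finset.sum_const, nsmul_eq_mul]
              _ ≤ ((β:ℝ) * t - m) - (β:ℝ) * (t - m) := by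
                  have h3 : (β:ℝ) * (t - m) ≤ (K.card:ℝ) * (t - m) :=
                    mul_le_mul_of_nonneg_right hKβ htm
                  rw [← hsumG']
                  linarith
              _ = ((β:ℝ) - 1) * m := by ring
        set d := ∑ l ∈ G', (uf l - ℓf l) with hd
        have hd0 : 0 ≤ d := Finset.sum_nonneg (fun l _ => sub_nonneg.2 (hℓu l))
        have hdsum : d = ∑ l ∈ G', uf l - ∑ l ∈ G', ℓf l := by
          rw [hd, Finset.sum_sub_distrib]
        set θ := (((β:ℝ) - 1) * m - ∑ l ∈ G', ℓf l) / d with hθ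
        set Qf := fun l => ℓf l + θ * (uf l - ℓf l) with hQf
        have hβn : ((β:ℝ) - 1) * m ≤ (n:ℝ) * m := by
          apply mul_le_mul_of_nonneg_right _ hm0
          have : β ≤ n := by omega
          have : (β:ℝ) ≤ (n:ℝ) := by exact_mod_cast this
          linarith
        have hθ0 : 0 ≤ θ := div_nonneg (by linarith) hd0
        have hQl : ∀ l, ℓf l ≤ Qf l := fun l =>
          le_add_of_nonneg_right (mul_nonneg hθ0 (sub_nonneg.2 (hℓu l)))
        have hQu : ∀ l, Qf l ≤ uf l := by
          intro l
          rcases eq_or_lt_of_le hd0 with hdz | hdpos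
          · have hall : uf l - ℓf l = 0 := by
              by_cases hlG : l ∈ G'
              · exact (Finset.sum_eq_zero_iff_of_nonneg
                  (fun x _ => sub_nonneg.2 (hℓu x))).1 hdz.symm l hlG
              · rw [hℓf, huf]; dsimp only; rw [if_neg hlG, if_neg hlG]; ring
            rw [hQf]; dsimp only
            rw [hall, mul_zero, add_zero]
            linarith [hℓu l]
          · have hθ1 : θ ≤ 1 := by
              rw [hθ, div_le_one hdpos]
              rw [hdsum]
              linarith [husum, hℓsum]
            rw [hQf]; dsimp only
            nlinarith [hℓu l, sub_nonneg.2 (hℓu l)]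
        have hQsum : ∑ l ∈ G', Qf l = ((β:ℝ) - 1) * m := by
          rw [hQf]; dsimp only
          rw [Finset.sum_add_distrib, ← Finset.mul_sum, ← hd]
          rcases eq_or_lt_of_le hd0 with hdz | hdpos
          · rw [← hdz, mul_zero, add_zero]
            have h1 : ∑ l ∈ G', uf l = ∑ l ∈ G', ℓf l := by
              rw [hdsum] at hdz
              linarith
            linarith [husum, hℓsum, hβn]
          · rw [hθ, div_mul_cancel₀ _ (ne_of_gt hdpos)]
            ring
        have hQ0 : ∀ l, 0 ≤ Qf l := fun l => le_trans (hℓ0 l) (hQl l)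
        have hQout : ∀ l, l ∉ G' → Qf l = 0 := by
          intro l hl
          rw [hQf, hℓf, huf]; dsimp only
          rw [if_neg hl, if_neg hl]
          ring
        have hQm : ∀ l, Qf l ≤ m := by
          intro l
          by_cases hl : l ∈ G'
          · have := hQu l
            rw [huf] at this; dsimp only at this
            rwa [if_pos hl] at this
          · rw [hQout l hl]; exact hm0
        -- recursive call 1
        obtain ⟨e₁, he₁0, he₁supp, he₁load, he₁tot⟩ :=
          ih G' (β - 1) Qf m hG'card (by omega) (by omega) hQ0 hQm hQout
            (by
              have hcast : ((β - 1 : ℕ) : ℝ) = (β:ℝ) - 1 := by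
                have : (1:ℕ) ≤ β := hβ1
                push_cast [Nat.cast_sub this]
                ring
              rw [hcast]; exact hQsum)
        -- recursive call 2
        set P₂ := fun l => if l ∈ G' then P l - Qf l else 0 with hP₂
        obtain ⟨e₂, he₂0, he₂supp, he₂load, he₂tot⟩ :=
          ih G' β P₂ (t - m) hG'card hβ1 (by omega)
            (by
              intro l
              rw [hP₂]; dsimp only; split
              · rename_i hl
                have h1 := hQu l
                rw [huf] at h1; dsimp only at h1; rw [if_pos hl] at h1
                have := hminle l hl
                linarith
              · rfl)
            (by
              intro l
              rw [hP₂]; dsimp only; split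
              · rename_i hl
                have h1 := hQl l
                rw [hℓf] at h1; dsimp only at h1; rw [if_pos hl] at h1
                have := le_max_left (P l - (t - m)) 0
                linarith
              · exact htm)
            (by intro l hl; rw [hP₂]; dsimp only; rw [if_neg hl])
            (by
              have : ∑ l ∈ G', P₂ l = ∑ l ∈ G', (P l - Qf l) :=
                Finset.sum_congr rfl (fun l hl => by rw [hP₂]; dsimp only; rw [if_pos hl])
              rw [this, Finset.sum_sub_distrib, hsumG', hQsum]
              ring)
        have he₁l₀ : ∀ W, e₁ W ≠ 0 → l₀ ∉ W := by
          intro W hW hl₀W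
          exact hl₀G' ((he₁supp W hW).1 hl₀W)
        refine ⟨fun V => (if l₀ ∈ V then e₁ (V.erase l₀) else 0) + e₂ V, ?_, ?_, ?_, ?_⟩
        · intro V
          apply add_nonneg _ (he₂0 V)
          split
          · exact he₁0 _
          · rfl
        · intro V hV
          dsimp only at hV
          have hcases : (if l₀ ∈ V then e₁ (V.erase l₀) else 0) ≠ 0 ∨ e₂ V ≠ 0 := by
            by_contra h
            push_neg at h
            rw [h.1, h.2, add_zero] at hV
            exact hV rfl
          rcases hcases with h1 | h2
          · have hl₀V : l₀ ∈ V := by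
              by_contra h
              rw [if_neg h] at h1
              exact h1 rfl
            rw [if_pos hl₀V] at h1
            obtain ⟨hsub, hcard⟩ := he₁supp _ h1
            constructor
            · intro x hx
              by_cases hxl : x = l₀
              · exact hxl ▸ hl₀G
              · exact Finset.mem_of_mem_erase
                  (hG' ▸ hsub (Finset.mem_erase.2 ⟨hxl, hx⟩))
            · have := Finset.card_erase_add_one hl₀V
              omega
          · obtain ⟨hsub, hcard⟩ := he₂supp _ h2
            exact ⟨hsub.trans (Finset.erase_subset _ _), hcard⟩
        · intro l
          rw [Finset.sum_add_distrib, he₂load l]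
          have hliftgen : ∀ (q : Finset (Fin L) → Prop) (_ : DecidablePred q)
              (_ : ∀ W, l₀ ∉ W → (q (insert l₀ W) ↔ q W)),
              ∑ V ∈ (OmegaL L β).filter (fun V => q V),
                (if l₀ ∈ V then e₁ (V.erase l₀) else 0)
              = ∑ W ∈ (OmegaL L (β-1)).filter (fun W => q W), e₁ W := by
            intro q hdec hq
            have h1 : ∑ V ∈ (OmegaL L β).filter (fun V => q V),
                (if l₀ ∈ V then e₁ (V.erase l₀) else 0)
                = ∑ V ∈ ((OmegaL L β).filter (fun V => q V)).filter (fun V => l₀ ∈ V),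
                    e₁ (V.erase l₀) := by
              rw [Finset.sum_filter (fun (V : Finset (Fin L)) => l₀ ∈ V)
                (fun (V : Finset (Fin L)) => e₁ (V.erase l₀))]
            rw [h1, Finset.filter_filter]
            have h2 : (OmegaL L β).filter (fun V => q V ∧ l₀ ∈ V)
                = (OmegaL L β).filter (fun V => l₀ ∈ V ∧ q V) := by
              apply Finset.filter_congr
              intro V _
              exact and_comm
            rw [h2]
            exact yz_lift_sum (by omega) l₀ e₁ he₁l₀ q hq
          by_cases hl : l = l₀
          · rw [hl]
            have hA1 : ∑ V ∈ (OmegaL L β).filter (fun V => l₀ ∈ V),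
                (if l₀ ∈ V then e₁ (V.erase l₀) else 0)
                = ∑ V ∈ (OmegaL L β).filter (fun V => l₀ ∈ V ∧ True), e₁ (V.erase l₀) := by
              have hfeq : (OmegaL L β).filter (fun V => l₀ ∈ V ∧ True)
                  = (OmegaL L β).filter (fun V => l₀ ∈ V) := by
                apply Finset.filter_congr
                intro V _
                simp
              rw [hfeq]
              apply Finset.sum_congr rfl
              intro V hV
              rw [Finset.mem_filter] at hV
              rw [if_pos hV.2]
            rw [hA1, yz_lift_sum (by omega) l₀ e₁ he₁l₀ (fun _ => True) (fun W _ => Iff.rfl)]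
            have hA2 : ∑ W ∈ (OmegaL L (β-1)).filter (fun _ => True), e₁ W
                = ∑ W ∈ OmegaL L (β-1), e₁ W := by
              rw [Finset.filter_true]
            rw [hA2, he₁tot]
            have hP₂l₀ : P₂ l₀ = 0 := by
              rw [hP₂]; dsimp only; rw [if_neg hl₀G']
            rw [hP₂l₀, add_zero]
          · have hA1 := hliftgen (fun V => l ∈ V) (by infer_instance)
              (fun W _ => by
                constructor
                · intro hmem
                  rcases Finset.mem_insert.1 hmem with h | h
                  · exact absurd h hl
                  · exact h
                · intro h; exact Finset.mem_insert_of_mem h)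
            rw [hA1, he₁load l]
            by_cases hlG' : l ∈ G'
            · have : P₂ l = P l - Qf l := by
                rw [hP₂]; dsimp only; rw [if_pos hlG']
              rw [this]; ring
            · have h1 : Qf l = 0 := hQout l hlG'
              have h2 : P₂ l = 0 := by rw [hP₂]; dsimp only; rw [if_neg hlG']
              have h3 : P l = 0 := by
                apply hPout
                intro hlG
                exact hlG' (Finset.mem_erase.2 ⟨hl, hlG⟩)
              rw [h1, h2, h3]; ring
        · rw [Finset.sum_add_distrib, he₂tot]
          have hA1 : ∑ V ∈ OmegaL L β, (if l₀ ∈ V then e₁ (V.erase l₀) else 0)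
              = ∑ V ∈ (OmegaL L β).filter (fun V => l₀ ∈ V ∧ True), e₁ (V.erase l₀) := by
            rw [Finset.sum_filter]
            apply Finset.sum_congr rfl
            intro V _
            by_cases h : l₀ ∈ V <;> simp [h]
          rw [hA1, yz_lift_sum (by omega) l₀ e₁ he₁l₀ (fun _ => True) (fun W _ => Iff.rfl),
            Finset.filter_true, he₁tot]
          ring

end Builder
section FLP

open Finset

variable {L : ℕ} (lam : Fin L → ℝ) (β : ℕ)

include β in
lemma fLP_bddAbove (hβ : 1 ≤ β) : BddAbove { x : ℝ | ∃ c : Finset (Fin L) → ℝ,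
    (∀ U ∈ OmegaL L β, 0 ≤ c U) ∧
    (∀ l : Fin L, ∑ U ∈ (OmegaL L β).filter (fun U => l ∈ U), c U ≤ lam l) ∧
    x = ∑ U ∈ OmegaL L β, c U } := by
  refine ⟨wlev lam β, ?_⟩
  rintro x ⟨c, h1, h2, rfl⟩
  exact feasible_le_wlev lam β hβ c h1 h2

lemma fLP_set_nonempty (hlam : ∀ l, 0 ≤ lam l) : Set.Nonempty { x : ℝ | ∃ c : Finset (Fin L) → ℝ,
    (∀ U ∈ OmegaL L β, 0 ≤ c U) ∧
    (∀ l : Fin L, ∑ U ∈ (OmegaL L β).filter (fun U => l ∈ U), c U ≤ lam l) ∧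
    x = ∑ U ∈ OmegaL L β, c U } := by
  refine ⟨0, fun _ => 0, fun U _ => le_rfl, fun l => ?_, by simp⟩
  simpa using hlam l

lemma fLP_eq_wlev (hlam : ∀ l, 0 ≤ lam l) (hβ : 1 ≤ β) (hβL : β ≤ L) :
    fLP L lam β = wlev lam β := by
  apply le_antisymm
  · apply csSup_le (fLP_set_nonempty lam β hlam)
    rintro x ⟨c, h1, h2, rfl⟩
    exact feasible_le_wlev lam β hβ c h1 h2
  · obtain ⟨e, he0, hesupp, heload, hetot⟩ := yz_builder (L := L) L Finset.univ β
      (fun l => min (lam l) (wlev lam β)) (wlev lam β)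
      (by simp) hβ (by simpa using hβL)
      (fun l => le_min (hlam l) (wlev_nonneg lam β hlam hβ))
      (fun l => min_le_right _ _)
      (fun l hl => absurd (Finset.mem_univ l) hl)
      ((wlev_eq lam β hlam hβ).symm)
    apply le_csSup (fLP_bddAbove lam β hβ)
    exact ⟨e, fun U _ => he0 U,
      fun l => by rw [heload l]; exact min_le_left _ _, hetot.symm⟩

end FLP

/-- **Linear programming result of Yeung and Zhang** (Theorem 5): any optimal solution of the
level-`α` linear program with positive value can be pushed down, via fractional covers
`g_U` of the hypergraphs `(U, 𝒱_U)` (with `𝒱_U` the `(α−1)`-element subsets of `U`), to an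
optimal solution of the level-`(α−1)` linear program. -/
theorem yeung_zhang_lp_pushdown
    {L : ℕ} (hL : 2 ≤ L) (lam : Fin L → ℝ) (hlam : ∀ l, 0 ≤ lam l)
    (α : ℕ) (hα1 : 2 ≤ α) (hα2 : α ≤ L)
    (c : Finset (Fin L) → ℝ) (hc : IsOptimal L lam α c) (hf : 0 < fLP L lam α) :
    ∃ g : Finset (Fin L) → Finset (Fin L) → ℝ,
      (∀ U ∈ OmegaL L α, ∀ V ∈ Finset.powersetCard (α - 1) U, 0 ≤ g U V) ∧
      (∀ U ∈ OmegaL L α, ∀ i ∈ U,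
        1 ≤ ∑ V ∈ (Finset.powersetCard (α - 1) U).filter (fun V => i ∈ V), g U V) ∧
      IsOptimal L lam (α - 1)
        (fun V => ∑ U ∈ (OmegaL L α).filter (fun U => V ⊆ U), g U V * c U) := by
  classical
  open Finset in
  obtain ⟨hcpos, hcfeas, hcval⟩ := hc
  have hα1' : 1 ≤ α := by omega
  have hαm1 : 1 ≤ α - 1 := by omega
  have hα1L : α - 1 ≤ L := by omega
  set σ := wlev lam α with hσd
  set τ := wlev lam (α - 1) with hτd
  set a1 : ℝ := (α : ℝ) - 1 with ha1d
  have hcastα : ((α - 1 : ℕ) : ℝ) = a1 := by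
    rw [ha1d]; push_cast [Nat.cast_sub hα1']; ring
  have ha1 : 0 < a1 := by
    rw [ha1d]
    have : (2:ℝ) ≤ (α:ℝ) := by exact_mod_cast hα1
    linarith
  have hflpα : fLP L lam α = σ := fLP_eq_wlev lam α hlam hα1' hα2
  have hflpα1 : fLP L lam (α - 1) = τ := fLP_eq_wlev lam (α - 1) hlam hαm1 hα1L
  have hσpos : 0 < σ := hflpα ▸ hf
  have hWσ : (α : ℝ) * σ = ∑ l, min (lam l) σ := wlev_eq lam α hlam hα1'
  have hWτ : a1 * τ = ∑ l, min (lam l) τ := by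
    rw [← hcastα]; exact wlev_eq lam (α - 1) hlam hαm1
  have hστ : σ ≤ τ := by
    apply le_wlev lam (α - 1) hαm1 (le_of_lt hσpos)
    rw [hcastα]
    calc a1 * σ ≤ (α:ℝ) * σ := by
          apply mul_le_mul_of_nonneg_right _ (le_of_lt hσpos)
          rw [ha1d]; linarith
      _ = ∑ l, min (lam l) σ := hWσ
  have hτpos : 0 < τ := lt_of_lt_of_le hσpos hστ
  -- loads of c are pinned
  set D := fun l => ∑ U ∈ (OmegaL L α).filter (fun U => l ∈ U), c U with hDd
  have hcsum : ∑ U ∈ OmegaL L α, c U = σ := by rw [hcval, hflpα]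
  have hDle : ∀ l, D l ≤ min (lam l) σ := by
    intro l
    apply le_min (hcfeas l)
    show (∑ U ∈ (OmegaL L α).filter (fun U => l ∈ U), c U) ≤ σ
    rw [← hcsum]
    exact Finset.sum_le_sum_of_subset_of_nonneg (Finset.filter_subset _ _)
      (fun U hU _ => hcpos U hU)
  have hpin : ∀ l, D l = min (lam l) σ := by
    have h0 : ∑ l, (min (lam l) σ - D l) = 0 := by
      rw [Finset.sum_sub_distrib, ← hWσ, hDd]
      have := yz_double_count (L := L) α c
      rw [this, hcsum]
      ring
    intro l
    have := (Finset.sum_eq_zero_iff_of_nonneg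
      (fun l _ => sub_nonneg.2 (hDle l))).1 h0 l (Finset.mem_univ l)
    linarith
  set φ := fun l => min (lam l) τ / min (lam l) σ with hφd
  have hDpos : ∀ U ∈ OmegaL L α, 0 < c U → ∀ l ∈ U, 0 < min (lam l) σ := by
    intro U hU hcU l hl
    have h1 : c U ≤ D l := by
      rw [hDd]
      exact Finset.single_le_sum
        (fun U' hU' => hcpos U' (Finset.mem_filter.1 hU').1)
        (Finset.mem_filter.2 ⟨hU, hl⟩)
    rw [hpin l] at h1
    linarith
  have hφ1 : ∀ l, 0 < min (lam l) σ → 1 ≤ φ l := by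
    intro l hpos
    rw [hφd]; dsimp only
    rw [le_div_iff₀ hpos, one_mul]
    exact min_le_min le_rfl hστ
  have hφle : ∀ l, 0 < min (lam l) σ → φ l ≤ τ / σ := by
    intro l hpos
    rw [hφd]; dsimp only
    by_cases hH : σ ≤ lam l
    · rw [min_eq_right hH]
      gcongr
      exact min_le_right _ _
    · push_neg at hH
      have h1 : min (lam l) σ = lam l := min_eq_left (le_of_lt hH)
      have h2 : min (lam l) τ = lam l := min_eq_left (le_of_lt (lt_of_lt_of_le hH hστ))
      have hlampos : 0 < lam l := by rwa [h1] at hpos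
      rw [h1, h2, div_self (ne_of_gt hlampos), le_div_iff₀ hσpos, one_mul]
      exact hστ
  set H := Finset.univ.filter (fun l => σ ≤ lam l) with hHd
  have hsuppH : ∀ U ∈ OmegaL L α, 0 < c U → H ⊆ U := by
    intro U hU hcU l hlH
    rw [hHd, Finset.mem_filter] at hlH
    by_contra hlU
    have hDl : D l = σ := by rw [hpin l, min_eq_right hlH.2]
    have hsplit : D l + ∑ U' ∈ (OmegaL L α).filter (fun U' => ¬ l ∈ U'), c U' = σ := by
      rw [hDd]; dsimp only
      rw [Finset.sum_filter_add_sum_filter_not, hcsum]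
    have h0 : ∑ U' ∈ (OmegaL L α).filter (fun U' => ¬ l ∈ U'), c U' = 0 := by
      linarith
    have hterm := (Finset.sum_eq_zero_iff_of_nonneg
      (fun U' hU' => hcpos U' (Finset.mem_filter.1 hU').1)).1 h0 U
      (Finset.mem_filter.2 ⟨hU, hlU⟩)
    linarith
  -- the key sum identity on support sets
  have hkey : ∀ U ∈ OmegaL L α, 0 < c U → ∑ l ∈ U, φ l = a1 * τ / σ := by
    intro U hU hcU
    have hHU := hsuppH U hU hcU
    have hcard : U.card = α := mem_OmegaL.1 hU
    have hsplit : ∑ l ∈ U \ H, φ l + ∑ l ∈ H, φ l = ∑ l ∈ U, φ l :=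
      Finset.sum_sdiff hHU
    have hφH : ∀ l ∈ H, φ l = min (lam l) τ / σ := by
      intro l hl
      rw [hHd, Finset.mem_filter] at hl
      rw [hφd]; dsimp only
      rw [min_eq_right hl.2]
    have hφUH : ∀ l ∈ U \ H, φ l = 1 := by
      intro l hl
      rw [Finset.mem_sdiff] at hl
      have hlam_lt : lam l < σ := by
        have := hl.2
        rw [hHd, Finset.mem_filter] at this
        push_neg at this
        exact this (Finset.mem_univ l)
      have hpos := hDpos U hU hcU l hl.1
      rw [hφd]; dsimp only
      have h1 : min (lam l) σ = lam l := min_eq_left (le_of_lt hlam_lt)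
      have h2 : min (lam l) τ = lam l :=
        min_eq_left (le_of_lt (lt_of_lt_of_le hlam_lt hστ))
      have hlampos : 0 < lam l := by rwa [h1] at hpos
      rw [h1, h2, div_self (ne_of_gt hlampos)]
    -- water equations split over H
    have hsplitσ : ∑ l ∈ H, min (lam l) σ + ∑ l ∈ Finset.univ \ H, min (lam l) σ
        = (α:ℝ) * σ := by
      rw [hWσ]
      rw [← Finset.sum_sdiff (Finset.subset_univ H)]
      ring
    have hsplitτ : ∑ l ∈ H, min (lam l) τ + ∑ l ∈ Finset.univ \ H, min (lam l) τ
        = a1 * τ := by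
      rw [hWτ]
      rw [← Finset.sum_sdiff (Finset.subset_univ H)]
      ring
    have hminσH : ∀ l ∈ H, min (lam l) σ = σ := by
      intro l hl
      rw [hHd, Finset.mem_filter] at hl
      exact min_eq_right hl.2
    have hminout : ∀ l ∈ Finset.univ \ H, min (lam l) σ = lam l ∧ min (lam l) τ = lam l := by
      intro l hl
      rw [Finset.mem_sdiff, hHd, Finset.mem_filter] at hl
      push_neg at hl
      have hlam_lt : lam l < σ := hl.2 (Finset.mem_univ l)
      exact ⟨min_eq_left (le_of_lt hlam_lt),
        min_eq_left (le_of_lt (lt_of_lt_of_le hlam_lt hστ))⟩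
    have hout_eq : ∑ l ∈ Finset.univ \ H, min (lam l) σ
        = ∑ l ∈ Finset.univ \ H, min (lam l) τ := by
      apply Finset.sum_congr rfl
      intro l hl
      rw [(hminout l hl).1, (hminout l hl).2]
    have hHσ : ∑ l ∈ H, min (lam l) σ = (H.card : ℝ) * σ := by
      rw [Finset.sum_congr rfl hminσH, Finset.sum_const, nsmul_eq_mul]
    -- Σ_H min(lam,τ) = a1 τ - α σ + |H| σ
    have hHτ : ∑ l ∈ H, min (lam l) τ = a1 * τ - (α:ℝ) * σ + (H.card : ℝ) * σ := by
      have := hsplitσ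
      rw [hHσ, hout_eq] at this
      linarith [hsplitτ]
    have hcardUH : ((U \ H).card : ℝ) = (α : ℝ) - (H.card : ℝ) := by
      rw [Finset.card_sdiff_of_subset hHU, hcard]
      have hHle : H.card ≤ α := hcard ▸ Finset.card_le_card hHU
      push_cast [Nat.cast_sub hHle]
      ring
    rw [← hsplit, Finset.sum_congr rfl hφUH, Finset.sum_congr rfl hφH,
      Finset.sum_const, nsmul_eq_mul, mul_one, ← Finset.sum_div, hHτ, hcardUH]
    field_simp
    ring
  -- the fractional covers
  set g := fun (U : Finset (Fin L)) (V : Finset (Fin L)) =>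
    if 0 < c U then (∑ l ∈ U, φ l) / a1 - ∑ j ∈ U \ V, φ j else 1 / a1 with hgd
  -- sdiff singleton helper
  have hsdiff : ∀ (U : Finset (Fin L)) (j : Fin L), j ∈ U → U \ U.erase j = {j} := by
    intro U j hj
    ext x
    simp only [Finset.mem_sdiff, Finset.mem_erase, Finset.mem_singleton]
    constructor
    · rintro ⟨hxU, hx⟩
      by_contra hne
      exact hx ⟨hne, hxU⟩
    · rintro rfl
      exact ⟨hj, fun h => h.1 rfl⟩
  have herase_inj : ∀ (U : Finset (Fin L)), ∀ j ∈ U, ∀ j' ∈ U,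
      U.erase j = U.erase j' → j = j' := by
    intro U j hj j' hj' heq
    by_contra hne
    have : j ∈ U.erase j' := Finset.mem_erase.2 ⟨hne, hj⟩
    rw [← heq] at this
    exact (Finset.mem_erase.1 this).1 rfl
  -- image description of the (α-1)-subsets of U
  have himg_filter : ∀ U ∈ OmegaL L α, ∀ i ∈ U,
      (Finset.powersetCard (α - 1) U).filter (fun V => i ∈ V)
        = (U.erase i).image (fun j => U.erase j) := by
    intro U hU i hi
    have hcard : U.card = α := mem_OmegaL.1 hU
    ext V
    simp only [Finset.mem_filter, Finset.mem_powersetCard, Finset.mem_image,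
      Finset.mem_erase]
    constructor
    · rintro ⟨⟨hVU, hVcard⟩, hiV⟩
      have hc1 : (U \ V).card = 1 := by
        rw [Finset.card_sdiff_of_subset hVU, hcard, hVcard]
        omega
      obtain ⟨j, hj⟩ := Finset.card_eq_one.1 hc1
      have hjU : j ∈ U := by
        have : j ∈ U \ V := hj ▸ Finset.mem_singleton_self j
        exact (Finset.mem_sdiff.1 this).1
      have hjV : j ∉ V := by
        have : j ∈ U \ V := hj ▸ Finset.mem_singleton_self j
        exact (Finset.mem_sdiff.1 this).2
      refine ⟨j, ⟨fun hji => hjV (hji ▸ hiV), hjU⟩, ?_⟩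
      have : U \ (U \ V) = V := Finset.sdiff_sdiff_eq_self hVU
      rw [← this, hj]
      ext x
      simp only [Finset.mem_erase, Finset.mem_sdiff, Finset.mem_singleton]
      tauto
    · rintro ⟨j, ⟨hji, hjU⟩, rfl⟩
      refine ⟨⟨Finset.erase_subset _ _, ?_⟩, Finset.mem_erase.2 ⟨fun h => hji h.symm, hi⟩⟩
      rw [Finset.card_erase_of_mem hjU, hcard]
  have himg_full : ∀ U ∈ OmegaL L α,
      Finset.powersetCard (α - 1) U = U.image (fun j => U.erase j) := by
    intro U hU
    have hcard : U.card = α := mem_OmegaL.1 hU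
    ext V
    simp only [Finset.mem_powersetCard, Finset.mem_image]
    constructor
    · rintro ⟨hVU, hVcard⟩
      have hc1 : (U \ V).card = 1 := by
        rw [Finset.card_sdiff_of_subset hVU, hcard, hVcard]
        omega
      obtain ⟨j, hj⟩ := Finset.card_eq_one.1 hc1
      have hjU : j ∈ U := by
        have : j ∈ U \ V := hj ▸ Finset.mem_singleton_self j
        exact (Finset.mem_sdiff.1 this).1
      refine ⟨j, hjU, ?_⟩
      have : U \ (U \ V) = V := Finset.sdiff_sdiff_eq_self hVU
      rw [← this, hj]
      ext x
      simp only [Finset.mem_erase, Finset.mem_sdiff, Finset.mem_singleton]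
      tauto
    · rintro ⟨j, hjU, rfl⟩
      exact ⟨Finset.erase_subset _ _, by rw [Finset.card_erase_of_mem hjU, hcard]⟩
  -- value of g on co-singletons
  have hgval : ∀ U ∈ OmegaL L α, 0 < c U → ∀ j ∈ U,
      g U (U.erase j) = (∑ l ∈ U, φ l) / a1 - φ j := by
    intro U hU hcU j hj
    rw [hgd]; dsimp only
    rw [if_pos hcU, hsdiff U j hj, Finset.sum_singleton]
  -- nonnegativity of g
  have hg0 : ∀ U ∈ OmegaL L α, ∀ V ∈ Finset.powersetCard (α - 1) U, 0 ≤ g U V := by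
    intro U hU V hV
    by_cases hcU : 0 < c U
    · obtain ⟨hVU, hVcard⟩ := Finset.mem_powersetCard.1 hV
      have hcard : U.card = α := mem_OmegaL.1 hU
      have hc1 : (U \ V).card = 1 := by
        rw [Finset.card_sdiff_of_subset hVU, hcard, hVcard]; omega
      obtain ⟨j, hj⟩ := Finset.card_eq_one.1 hc1
      have hjU : j ∈ U := by
        have : j ∈ U \ V := hj ▸ Finset.mem_singleton_self j
        exact (Finset.mem_sdiff.1 this).1
      rw [hgd]; dsimp only
      rw [if_pos hcU, hj, Finset.sum_singleton]
      have hS : (∑ l ∈ U, φ l) / a1 = τ / σ := by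
        rw [hkey U hU hcU]
        field_simp
      rw [hS]
      have := hφle j (hDpos U hU hcU j hjU)
      linarith
    · rw [hgd]; dsimp only
      rw [if_neg hcU]
      positivity
  -- cover sums
  have hcover : ∀ U ∈ OmegaL L α, ∀ i ∈ U,
      ∑ V ∈ (Finset.powersetCard (α - 1) U).filter (fun V => i ∈ V), g U V
        = (if 0 < c U then φ i else 1) := by
    intro U hU i hi
    have hcard : U.card = α := mem_OmegaL.1 hU
    rw [himg_filter U hU i hi]
    rw [Finset.sum_image (fun j hj j' hj' heq => herase_inj U j
      (Finset.mem_of_mem_erase hj) j' (Finset.mem_of_mem_erase hj') heq)]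
    have hcarde : ((U.erase i).card : ℝ) = a1 := by
      rw [Finset.card_erase_of_mem hi, hcard, ← hcastα]
    by_cases hcU : 0 < c U
    · rw [if_pos hcU]
      have hterm : ∀ j ∈ U.erase i, g U (U.erase j) = (∑ l ∈ U, φ l) / a1 - φ j :=
        fun j hj => hgval U hU hcU j (Finset.mem_of_mem_erase hj)
      rw [Finset.sum_congr rfl hterm, Finset.sum_sub_distrib, Finset.sum_const,
        nsmul_eq_mul, hcarde]
      have h2 : ∑ j ∈ U.erase i, φ j = (∑ l ∈ U, φ l) - φ i := by
        have := Finset.add_sum_erase U φ hi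
        linarith
      rw [h2, mul_div_cancel₀ _ (ne_of_gt ha1)]
      ring
    · rw [if_neg hcU]
      have hterm : ∀ j ∈ U.erase i, g U (U.erase j) = 1 / a1 := by
        intro j hj
        rw [hgd]; dsimp only
        rw [if_neg hcU]
      rw [Finset.sum_congr rfl hterm, Finset.sum_const, nsmul_eq_mul, hcarde]
      field_simp
  -- full sums
  have hfull : ∀ U ∈ OmegaL L α, 0 < c U →
      ∑ V ∈ Finset.powersetCard (α - 1) U, g U V = τ / σ := by
    intro U hU hcU
    have hcard : U.card = α := mem_OmegaL.1 hU
    rw [himg_full U hU]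
    rw [Finset.sum_image (fun j hj j' hj' heq => herase_inj U j hj j' hj' heq)]
    have hterm : ∀ j ∈ U, g U (U.erase j) = (∑ l ∈ U, φ l) / a1 - φ j :=
      fun j hj => hgval U hU hcU j hj
    rw [Finset.sum_congr rfl hterm, Finset.sum_sub_distrib, Finset.sum_const,
      nsmul_eq_mul, hcard]
    have hS : ∑ l ∈ U, φ l = a1 * τ / σ := hkey U hU hcU
    rw [hS]
    have hane : a1 ≠ 0 := ne_of_gt ha1
    have hσne : σ ≠ 0 := ne_of_gt hσpos
    have hαa1 : (α : ℝ) = a1 + 1 := by rw [ha1d]; ring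
    rw [hαa1]
    field_simp
    ring
  -- the sum swap
  have hswap : ∀ (p : Finset (Fin L) → Prop) (_ : DecidablePred p),
      ∑ V ∈ (OmegaL L (α - 1)).filter (fun V => p V),
        (∑ U ∈ (OmegaL L α).filter (fun U => V ⊆ U), g U V * c U)
      = ∑ U ∈ OmegaL L α,
          (∑ V ∈ (Finset.powersetCard (α - 1) U).filter (fun V => p V), g U V) * c U := by
    intro p hp
    have h1 : ∑ V ∈ (OmegaL L (α - 1)).filter (fun V => p V),
        (∑ U ∈ (OmegaL L α).filter (fun U => V ⊆ U), g U V * c U)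
        = ∑ V ∈ OmegaL L (α - 1), ∑ U ∈ OmegaL L α,
            (if p V ∧ V ⊆ U then g U V * c U else 0) := by
      rw [Finset.sum_filter]
      apply Finset.sum_congr rfl
      intro V _
      by_cases hpV : p V
      · simp only [hpV, if_true, true_and]
        rw [Finset.sum_filter]
      · simp [hpV]
    rw [h1, Finset.sum_comm]
    apply Finset.sum_congr rfl
    intro U _
    have h2 : ∑ V ∈ OmegaL L (α - 1), (if p V ∧ V ⊆ U then g U V * c U else 0)
        = ∑ V ∈ (OmegaL L (α - 1)).filter (fun V => p V ∧ V ⊆ U), g U V * c U := by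
      rw [Finset.sum_filter]
    rw [h2]
    have h3 : (OmegaL L (α - 1)).filter (fun V => p V ∧ V ⊆ U)
        = (Finset.powersetCard (α - 1) U).filter (fun V => p V) := by
      ext V
      simp only [Finset.mem_filter, mem_OmegaL, Finset.mem_powersetCard]
      tauto
    rw [h3, Finset.sum_mul]
  refine ⟨g, hg0, ?_, ?_, ?_, ?_⟩
  · -- cover condition
    intro U hU i hi
    rw [hcover U hU i hi]
    by_cases hcU : 0 < c U
    · rw [if_pos hcU]
      exact hφ1 i (hDpos U hU hcU i hi)
    · rw [if_neg hcU]
  · -- nonnegativity of the pushdown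
    intro V hV
    dsimp only
    apply Finset.sum_nonneg
    intro U hU
    rw [Finset.mem_filter] at hU
    apply mul_nonneg _ (hcpos U hU.1)
    apply hg0 U hU.1
    exact Finset.mem_powersetCard.2 ⟨hU.2, mem_OmegaL.1 hV⟩
  · -- feasibility of the pushdown
    intro l
    have := hswap (fun V => l ∈ V) (by infer_instance)
    dsimp only
    rw [this]
    have hterm : ∀ U ∈ OmegaL L α,
        (∑ V ∈ (Finset.powersetCard (α - 1) U).filter (fun V => l ∈ V), g U V) * c U
        = (if l ∈ U then φ l * c U else 0) := by
      intro U hU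
      by_cases hlU : l ∈ U
      · rw [if_pos hlU, hcover U hU l hlU]
        rcases (hcpos U hU).lt_or_eq with hcU | hcU
        · rw [if_pos hcU]
        · rw [← hcU]
          ring
      · rw [if_neg hlU]
        have hempty : (Finset.powersetCard (α - 1) U).filter (fun V => l ∈ V) = ∅ := by
          apply Finset.filter_eq_empty_iff.2
          intro V hV hlV
          exact hlU ((Finset.mem_powersetCard.1 hV).1 hlV)
        rw [hempty, Finset.sum_empty, zero_mul]
    rw [Finset.sum_congr rfl hterm, ← Finset.sum_filter, ← Finset.mul_sum]
    have hDl : ∑ U ∈ (OmegaL L α).filter (fun U => l ∈ U), c U = min (lam l) σ := hpin l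
    rw [hDl]
    by_cases h0 : min (lam l) σ = 0
    · rw [h0, mul_zero]
      exact hlam l
    · rw [hφd]; dsimp only
      rw [div_mul_cancel₀ _ h0]
      exact min_le_left _ _
  · -- optimal value of the pushdown
    have := hswap (fun _ => True) (by infer_instance)
    rw [Finset.filter_true] at this
    have h4 : ∀ V ∈ OmegaL L (α-1),
        (fun V => ∑ U ∈ (OmegaL L α).filter (fun U => V ⊆ U), g U V * c U) V
        = ∑ U ∈ (OmegaL L α).filter (fun U => V ⊆ U), g U V * c U := fun V _ => rfl
    rw [Finset.sum_congr rfl h4, this]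
    have hterm : ∀ U ∈ OmegaL L α,
        (∑ V ∈ (Finset.powersetCard (α - 1) U).filter (fun _ => True), g U V) * c U
        = (τ / σ) * c U := by
      intro U hU
      rw [Finset.filter_true]
      rcases (hcpos U hU).lt_or_eq with hcU | hcU
      · rw [hfull U hU hcU]
      · rw [← hcU]
        ring
    rw [Finset.sum_congr rfl hterm, ← Finset.mul_sum, hcsum, hflpα1]
    field_simp
end

section
/- The sliding-window chain is not expressible via fractional covers: Let L ≥ 3 and 2 ≤ α ≤ L−1, and fix l ∈ {1,…,L}. (i) Any fractional cover g of the hypergraph (W_l^{(α)}, {W_l^{(α−1)}, W_{⟨l+1⟩}^{(α−1)}}) satisfies g(W_l^{(α−1)}) ≥ 1 and g(W_{⟨l+1⟩}^{(α−1)}) ≥ 1. (ii) Consequently, if c assigns c(W_m^{(β)}) := 1/β to every sliding window of length β ∈ {1,…,L−1}, then for any α with 2 < α ≤ L−1 and any fractional covers g_{W_l^{(α)}} and g_{W_{⟨l−1⟩}^{(α)}} of the respective hypergraphs, g_{W_l^{(α)}}(W_l^{(α−1)}) c(W_l^{(α)}) + g_{W_{⟨l−1⟩}^{(α)}}(W_l^{(α−1)})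 c(W_{⟨l−1⟩}^{(α)}) ≥ 2/α > 1/(α−1) = c(W_l^{(α−1)}). -/
/-- The sliding window `W_l^{(α)}` (0-indexed: `{⟨l+k⟩ : k < α}` with indices mod `L`). -/
def win (L : ℕ) (l : Fin L) (α : ℕ) : Finset (Fin L) :=
  (Finset.range α).image (fun k => (⟨((l : ℕ) + k) % L, Nat.mod_lt _ l.pos⟩ : Fin L))

/-- `⟨l+1⟩`: the cyclic successor of `l` in `{1,…,L}` (0-indexed). -/
def nxt {L : ℕ} (l : Fin L) : Fin L := ⟨((l : ℕ) + 1) % L, Nat.mod_lt _ l.pos⟩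

/-- `⟨l−1⟩`: the cyclic predecessor of `l` in `{1,…,L}` (0-indexed). -/
def prv {L : ℕ} (l : Fin L) : Fin L := ⟨((l : ℕ) + (L - 1)) % L, Nat.mod_lt _ l.pos⟩



lemma mem_win {L : ℕ} (m i : Fin L) (β : ℕ) :
    i ∈ win L m β ↔ ∃ k, k < β ∧ ((m : ℕ) + k) % L = (i : ℕ) := by
  simp [win, Fin.ext_iff]

lemma cancel {L a k k' : ℕ} (hk : k < L) (hk' : k' < L)
    (h : (a + k) % L = (a + k') % L) : k = k' := by
  have h2 := Nat.ModEq.add_left_cancel' a (h : Nat.ModEq L (a + k) (a + k'))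
  rwa [Nat.ModEq, Nat.mod_eq_of_lt hk, Nat.mod_eq_of_lt hk'] at h2

lemma key {X : Type*} [DecidableEq X] (A B : Finset X) (g : Finset X → ℝ) (i : X)
    (hiB : i ∈ B) (hiA : i ∉ A)
    (hsum : 1 ≤ ∑ V ∈ ({A, B} : Finset (Finset X)).filter (fun V => i ∈ V), g V) :
    1 ≤ g B := by
  rwa [show ({A, B} : Finset (Finset X)).filter (fun V => i ∈ V) = {B} by
      rw [Finset.filter_insert, if_neg hiA, Finset.filter_singleton, if_pos hiB],
    Finset.sum_singleton] at hsum

lemma key' {X : Type*} [DecidableEq X] (A B : Finset X) (g : Finset X → ℝ) (i : X)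
    (hiA : i ∈ A) (hiB : i ∉ B)
    (hsum : 1 ≤ ∑ V ∈ ({A, B} : Finset (Finset X)).filter (fun V => i ∈ V), g V) :
    1 ≤ g A := by
  rw [Finset.pair_comm] at hsum
  exact key B A g i hiA hiB hsum

set_option maxHeartbeats 800000 in
/-- **The sliding-window chain is not expressible via fractional covers**:
(i) any fractional cover `g` of the hypergraph `(W_l^{(α)}, {W_l^{(α−1)}, W_{⟨l+1⟩}^{(α−1)}})`
satisfies `g(W_l^{(α−1)}) ≥ 1` and `g(W_{⟨l+1⟩}^{(α−1)}) ≥ 1`;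
(ii) consequently, with the weights `c(W_m^{(β)}) = 1/β`, for `2 < α ≤ L−1` and any fractional
covers `g₁` of the hypergraph of `W_l^{(α)}` and `g₂` of the hypergraph of `W_{⟨l−1⟩}^{(α)}`,
`g₁(W_l^{(α−1)})·(1/α) + g₂(W_l^{(α−1)})·(1/α) ≥ 2/α > 1/(α−1) = c(W_l^{(α−1)})`. -/
theorem sliding_window_not_fractional_cover
    {L : ℕ} (hL : 3 ≤ L) (α : ℕ) (hα1 : 2 ≤ α) (hα2 : α ≤ L - 1) (l : Fin L) :
    (∀ g : Finset (Fin L) → ℝ,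
      (∀ V ∈ ({win L l (α - 1), win L (nxt l) (α - 1)} : Finset (Finset (Fin L))), 0 ≤ g V) →
      (∀ i ∈ win L l α,
        1 ≤ ∑ V ∈ ({win L l (α - 1), win L (nxt l) (α - 1)} :
              Finset (Finset (Fin L))).filter (fun V => i ∈ V), g V) →
      1 ≤ g (win L l (α - 1)) ∧ 1 ≤ g (win L (nxt l) (α - 1))) ∧
    (2 < α →
      ∀ g₁ g₂ : Finset (Fin L) → ℝ,
        (∀ V ∈ ({win L l (α - 1), win L (nxt l) (α - 1)} : Finset (Finset (Fin L))), 0 ≤ g₁ V) →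
        (∀ i ∈ win L l α,
          1 ≤ ∑ V ∈ ({win L l (α - 1), win L (nxt l) (α - 1)} :
                Finset (Finset (Fin L))).filter (fun V => i ∈ V), g₁ V) →
        (∀ V ∈ ({win L (prv l) (α - 1), win L l (α - 1)} : Finset (Finset (Fin L))), 0 ≤ g₂ V) →
        (∀ i ∈ win L (prv l) α,
          1 ≤ ∑ V ∈ ({win L (prv l) (α - 1), win L l (α - 1)} :
                Finset (Finset (Fin L))).filter (fun V => i ∈ V), g₂ V) →
        g₁ (win L l (α - 1)) * (1 / (α : ℝ)) + g₂ (win L l (α - 1)) * (1 / (α : ℝ)) ≥ 2 / (α : ℝ) ∧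
          (2 / (α : ℝ) > 1 / ((α : ℝ) - 1))) := by
  have hlv : (l : ℕ) < L := l.isLt
  -- the element e = ⟨l + (α-1)⟩
  set e : Fin L := ⟨((l : ℕ) + (α - 1)) % L, Nat.mod_lt _ l.pos⟩ with he_def
  have hlS : l ∈ win L l α := by
    rw [mem_win]; exact ⟨0, by omega, by simp [Nat.mod_eq_of_lt hlv]⟩
  have hlA : l ∈ win L l (α - 1) := by
    rw [mem_win]; exact ⟨0, by omega, by simp [Nat.mod_eq_of_lt hlv]⟩
  have hlB : l ∉ win L (nxt l) (α - 1) := by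
    rw [mem_win]; rintro ⟨k, hk, hke⟩
    have h2 : ((l : ℕ) + (1 + k)) % L = ((l : ℕ) + 0) % L := by
      rw [show (l : ℕ) + (1 + k) = (l : ℕ) + 1 + k by omega, ← Nat.mod_add_mod]
      rw [show ((l : ℕ) + 0) % L = (l : ℕ) by simp [Nat.mod_eq_of_lt hlv]]
      exact hke
    have := cancel (by omega) (by omega) h2
    omega
  have heS : e ∈ win L l α := by
    rw [mem_win]; exact ⟨α - 1, by omega, rfl⟩
  have heA : e ∉ win L l (α - 1) := by
    rw [mem_win]; rintro ⟨k, hk, hke⟩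
    have := cancel (show k < L by omega) (show α - 1 < L by omega) hke
    omega
  have heB : e ∈ win L (nxt l) (α - 1) := by
    rw [mem_win]
    refine ⟨α - 2, by omega, ?_⟩
    show (((l : ℕ) + 1) % L + (α - 2)) % L = ((l : ℕ) + (α - 1)) % L
    rw [Nat.mod_add_mod]
    congr 1
    omega
  have part1 : ∀ g : Finset (Fin L) → ℝ,
      (∀ V ∈ ({win L l (α - 1), win L (nxt l) (α - 1)} : Finset (Finset (Fin L))), 0 ≤ g V) →
      (∀ i ∈ win L l α,
        1 ≤ ∑ V ∈ ({win L l (α - 1), win L (nxt l) (α - 1)} :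
              Finset (Finset (Fin L))).filter (fun V => i ∈ V), g V) →
      1 ≤ g (win L l (α - 1)) ∧ 1 ≤ g (win L (nxt l) (α - 1)) := by
    intro g _ hcov
    exact ⟨key' _ _ g l hlA hlB (hcov l hlS), key _ _ g e heB heA (hcov e heS)⟩
  refine ⟨part1, fun hα3 g₁ g₂ hg₁0 hg₁c hg₂0 hg₂c => ?_⟩
  -- the element f = ⟨l + (α-2)⟩
  set f : Fin L := ⟨((l : ℕ) + (α - 2)) % L, Nat.mod_lt _ l.pos⟩ with hf_def
  have hfP : f ∈ win L (prv l) α := by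
    rw [mem_win]
    refine ⟨α - 1, by omega, ?_⟩
    show (((l : ℕ) + (L - 1)) % L + (α - 1)) % L = ((l : ℕ) + (α - 2)) % L
    rw [Nat.mod_add_mod, show (l : ℕ) + (L - 1) + (α - 1) = (l : ℕ) + (α - 2) + L by omega,
      Nat.add_mod_right]
  have hfC : f ∉ win L (prv l) (α - 1) := by
    rw [mem_win]; rintro ⟨k, hk, hke⟩
    have hke' : ((l : ℕ) + (L - 1) + k) % L = ((l : ℕ) + (α - 2)) % L := by
      rw [← Nat.mod_add_mod]; exact hke
    have h2 := Nat.ModEq.add_right 1 (hke' : Nat.ModEq L _ _)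
    have h3 : ((l : ℕ) + k + L) % L = ((l : ℕ) + (α - 1)) % L := by
      rw [show (l : ℕ) + k + L = (l : ℕ) + (L - 1) + k + 1 by omega,
        show (l : ℕ) + (α - 1) = (l : ℕ) + (α - 2) + 1 by omega]
      exact h2
    rw [Nat.add_mod_right] at h3
    have := cancel (show k < L by omega) (show α - 1 < L by omega) h3
    omega
  have hfA : f ∈ win L l (α - 1) := by
    rw [mem_win]; exact ⟨α - 2, by omega, rfl⟩
  have h1 : 1 ≤ g₁ (win L l (α - 1)) := (part1 g₁ hg₁0 hg₁c).1
  have h2 : 1 ≤ g₂ (win L l (α - 1)) := key _ _ g₂ f hfA hfC (hg₂c f hfP)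
  have hαR : (3 : ℝ) ≤ (α : ℝ) := by exact_mod_cast hα3
  have hαpos : (0 : ℝ) < (α : ℝ) := by linarith
  constructor
  · have hinv : (0 : ℝ) ≤ 1 / (α : ℝ) := by positivity
    have := add_le_add (mul_le_mul_of_nonneg_right h1 hinv) (mul_le_mul_of_nonneg_right h2 hinv)
    calc (2 : ℝ) / (α : ℝ) = 1 * (1 / (α : ℝ)) + 1 * (1 / (α : ℝ)) := by ring
      _ ≤ _ := this
  · rw [gt_iff_lt, div_lt_div_iff₀ (by linarith) hαpos]
    linarith
end

section
/- Reduction of the supporting-hyperplane family for SMDC-A (core of Proposition 2): Let L ≥ 1, let λ = (λ_1,…,λ_L) with all λ_l ≥ 0, let H_1,…,H_L ≥ 0, and let (R_0, R_1,…,R_L) be a tuple of nonnegative reals. Then the following are equivalent: (i) for every λ_0 ≥ 0, λ_0 R_0 + ∑_{l=1}^{L} λ_l R_l ≥ ∑_{α=1}^{L} min(f_α(λ), λ_0) H_α; (ii) for every m ∈ {1,…,L}, f_m(λ) R_0 + ∑_{l=1}^{L} λ_l R_l ≥ f_m(λ) ∑_{α=1}^{m} H_α + ∑_{α=m+1}^{L}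 f_α(λ) H_α. -/
def FeasSet (L : ℕ) (lam : Fin L → ℝ) (α : ℕ) : Set ℝ :=
  { x : ℝ | ∃ c : Finset (Fin L) → ℝ,
    (∀ U ∈ OmegaL L α, 0 ≤ c U) ∧
    (∀ l : Fin L, ∑ U ∈ (OmegaL L α).filter (fun U => l ∈ U), c U ≤ lam l) ∧
    x = ∑ U ∈ OmegaL L α, c U }

lemma fLP_eq (L : ℕ) (lam : Fin L → ℝ) (α : ℕ) : fLP L lam α = sSup (FeasSet L lam α) := rfl

lemma zero_mem_feas (L : ℕ) (lam : Fin L → ℝ) (hlam : ∀ l, 0 ≤ lam l) (α : ℕ) :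
    (0:ℝ) ∈ FeasSet L lam α := by
  refine ⟨0, fun U _ => le_refl 0, fun l => ?_, by simp⟩
  simpa using hlam l

lemma feas_le (L : ℕ) (lam : Fin L → ℝ) {α : ℕ} (hα : 1 ≤ α)
    {x : ℝ} (hx : x ∈ FeasSet L lam α) : x ≤ ∑ l : Fin L, lam l := by
  obtain ⟨c, hc0, hcc, rfl⟩ := hx
  have key : ∑ l : Fin L, ∑ U ∈ (OmegaL L α).filter (fun U => l ∈ U), c U
      = ∑ U ∈ OmegaL L α, (U.card : ℝ) * c U := by
    simp_rw [Finset.sum_filter]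
    rw [Finset.sum_comm]
    refine Finset.sum_congr rfl fun U _ => ?_
    rw [Finset.sum_ite_mem]
    simp [mul_comm]
  have h1 : ∑ U ∈ OmegaL L α, c U ≤ ∑ U ∈ OmegaL L α, (U.card : ℝ) * c U := by
    refine Finset.sum_le_sum fun U hU => ?_
    have hcard : U.card = α := (Finset.mem_powersetCard.mp hU).2
    have : (1:ℝ) ≤ (U.card : ℝ) := by
      rw [hcard]; exact_mod_cast hα
    nlinarith [hc0 U hU]
  calc ∑ U ∈ OmegaL L α, c U ≤ ∑ U ∈ OmegaL L α, (U.card : ℝ) * c U := h1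
    _ = ∑ l : Fin L, ∑ U ∈ (OmegaL L α).filter (fun U => l ∈ U), c U := key.symm
    _ ≤ ∑ l : Fin L, lam l := Finset.sum_le_sum fun l _ => hcc l

lemma feas_bdd (L : ℕ) (lam : Fin L → ℝ) {α : ℕ} (hα : 1 ≤ α) :
    BddAbove (FeasSet L lam α) := ⟨∑ l : Fin L, lam l, fun x hx => feas_le L lam hα hx⟩

lemma fLP_nonneg (L : ℕ) (lam : Fin L → ℝ) (hlam : ∀ l, 0 ≤ lam l) {α : ℕ} (hα : 1 ≤ α) :
    0 ≤ fLP L lam α :=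
  le_csSup (feas_bdd L lam hα) (zero_mem_feas L lam hlam α)

open Classical in
noncomputable def eraseMax {L : ℕ} (U : Finset (Fin L)) : Finset (Fin L) :=
  if h : U.Nonempty then U.erase (U.max' h) else ∅

lemma eraseMax_subset {L : ℕ} (U : Finset (Fin L)) : eraseMax U ⊆ U := by
  unfold eraseMax
  split
  · exact Finset.erase_subset _ _
  · simp

lemma eraseMax_card {L : ℕ} {U : Finset (Fin L)} (h : U.Nonempty) :
    (eraseMax U).card = U.card - 1 := by
  rw [eraseMax, dif_pos h]
  exact Finset.card_erase_of_mem (U.max'_mem h)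

lemma fLP_antitone_step (L : ℕ) (lam : Fin L → ℝ) (hlam : ∀ l, 0 ≤ lam l)
    {α : ℕ} (hα : 1 ≤ α) : fLP L lam (α + 1) ≤ fLP L lam α := by
  rw [fLP_eq, fLP_eq]
  refine csSup_le ⟨0, zero_mem_feas L lam hlam _⟩ fun x hx => ?_
  obtain ⟨c, hc0, hcc, rfl⟩ := hx
  refine le_csSup (feas_bdd L lam hα) ?_
  classical
  set c' : Finset (Fin L) → ℝ :=
    fun V => ∑ U ∈ (OmegaL L (α+1)).filter (fun U => eraseMax U = V), c U with hc'
  have hmaps : ∀ U ∈ OmegaL L (α+1), eraseMax U ∈ OmegaL L α := by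
    intro U hU
    have hcard : U.card = α + 1 := (Finset.mem_powersetCard.mp hU).2
    have hne : U.Nonempty := Finset.card_pos.mp (by omega)
    rw [OmegaL, Finset.mem_powersetCard]
    exact ⟨Finset.subset_univ _, by rw [eraseMax_card hne, hcard]; omega⟩
  refine ⟨c', fun V _ => Finset.sum_nonneg fun U hU =>
      hc0 U (Finset.mem_filter.mp hU).1, fun l => ?_, ?_⟩
  · have h1 : ∑ V ∈ (OmegaL L α).filter (fun V => l ∈ V), c' V
        = ∑ U ∈ (OmegaL L (α+1)).filter
            (fun U => eraseMax U ∈ (OmegaL L α).filter (fun V => l ∈ V)), c U := by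
      rw [hc']
      exact Finset.sum_fiberwise_eq_sum_filter _ _ _ _
    rw [h1]
    refine le_trans (Finset.sum_le_sum_of_subset_of_nonneg ?_ ?_) (hcc l)
    · intro U hU
      rw [Finset.mem_filter] at hU ⊢
      refine ⟨hU.1, ?_⟩
      have := (Finset.mem_filter.mp hU.2).2
      exact eraseMax_subset U this
    · intro U hU _
      exact hc0 U (Finset.mem_filter.mp hU).1
  · rw [hc', Finset.sum_fiberwise_of_maps_to hmaps]

lemma fLP_anti (L : ℕ) (lam : Fin L → ℝ) (hlam : ∀ l, 0 ≤ lam l)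
    {a b : ℕ} (ha : 1 ≤ a) (hab : a ≤ b) : fLP L lam b ≤ fLP L lam a := by
  induction b, hab using Nat.le_induction with
  | base => exact le_refl _
  | succ n hn ih => exact le_trans (fLP_antitone_step L lam hlam (le_trans ha hn)) ih

lemma sum_Icc_split (g : ℕ → ℝ) {m L : ℕ} (h : m ≤ L) :
    ∑ α ∈ Finset.Icc 1 L, g α
      = ∑ α ∈ Finset.Icc 1 m, g α + ∑ α ∈ Finset.Icc (m+1) L, g α := by
  rw [show (1:ℕ) = 0 + 1 from rfl, Finset.Icc_add_one_left_eq_Ioc, Finset.Icc_add_one_left_eq_Ioc, zero_add, Finset.Icc_add_one_left_eq_Ioc,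
    Finset.sum_Ioc_consecutive g (Nat.zero_le m) h]

lemma sum_Icc_peel (g : ℕ → ℝ) {m L : ℕ} (h : m + 1 ≤ L) :
    ∑ α ∈ Finset.Icc (m+1) L, g α = g (m+1) + ∑ α ∈ Finset.Icc (m+2) L, g α := by
  rw [Finset.Icc_add_one_left_eq_Ioc, show m + 2 = (m+1) + 1 from rfl, Finset.Icc_add_one_left_eq_Ioc,
    ← Finset.sum_Ioc_consecutive g (Nat.le_succ m) h, Nat.Ioc_succ_singleton,
    Finset.sum_singleton]

/-- **Reduction of the supporting-hyperplane family for SMDC-A** (core of Proposition 2):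
the family of inequalities over all `λ₀ ≥ 0` is equivalent to the finite subfamily obtained
at `λ₀ = f_m(λ)`, `m = 1, …, L`. -/
theorem smdca_hyperplane_reduction
    {L : ℕ} (hL : 1 ≤ L) (lam : Fin L → ℝ) (hlam : ∀ l, 0 ≤ lam l)
    (H : ℕ → ℝ) (hH : ∀ α ∈ Finset.Icc 1 L, 0 ≤ H α)
    (R0 : ℝ) (hR0 : 0 ≤ R0) (R : Fin L → ℝ) (hR : ∀ l, 0 ≤ R l) :
    (∀ lam0 : ℝ, 0 ≤ lam0 →
        lam0 * R0 + ∑ l : Fin L, lam l * R l ≥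
          ∑ α ∈ Finset.Icc 1 L, min (fLP L lam α) lam0 * H α) ↔
      (∀ m ∈ Finset.Icc 1 L,
        fLP L lam m * R0 + ∑ l : Fin L, lam l * R l ≥
          fLP L lam m * ∑ α ∈ Finset.Icc 1 m, H α +
            ∑ α ∈ Finset.Icc (m + 1) L, fLP L lam α * H α) := by
  set F : ℕ → ℝ := fLP L lam with hF
  set S : ℝ := ∑ l : Fin L, lam l * R l with hS
  have hSnn : 0 ≤ S := Finset.sum_nonneg fun l _ => mul_nonneg (hlam l) (hR l)
  have hFnn : ∀ m, 1 ≤ m → 0 ≤ F m := fun m hm => fLP_nonneg L lam hlam hm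
  have hFanti : ∀ a b, 1 ≤ a → a ≤ b → F b ≤ F a := fun a b ha hab =>
    fLP_anti L lam hlam ha hab
  constructor
  · intro h m hm
    obtain ⟨hm1, hmL⟩ := Finset.mem_Icc.mp hm
    have h0 := h (F m) (hFnn m hm1)
    have hsplit := sum_Icc_split (fun α => min (F α) (F m) * H α) hmL
    have h1 : ∑ α ∈ Finset.Icc 1 m, min (F α) (F m) * H α
        = F m * ∑ α ∈ Finset.Icc 1 m, H α := by
      rw [Finset.mul_sum]
      refine Finset.sum_congr rfl fun α hα => ?_
      obtain ⟨hα1, hα2⟩ := Finset.mem_Icc.mp hα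
      rw [min_eq_right (hFanti α m hα1 hα2)]
    have h2 : ∑ α ∈ Finset.Icc (m+1) L, min (F α) (F m) * H α
        = ∑ α ∈ Finset.Icc (m+1) L, F α * H α := by
      refine Finset.sum_congr rfl fun α hα => ?_
      obtain ⟨hα1, hα2⟩ := Finset.mem_Icc.mp hα
      rw [min_eq_left (hFanti m α hm1 (by omega))]
    rw [hsplit, h1, h2] at h0
    exact h0
  · intro h lam0 h0
    have hyp : ∀ m, 1 ≤ m → m ≤ L →
        F m * R0 + S ≥ F m * ∑ α ∈ Finset.Icc 1 m, H α
          + ∑ α ∈ Finset.Icc (m + 1) L, F α * H α :=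
      fun m h1 h2 => h m (Finset.mem_Icc.mpr ⟨h1, h2⟩)
    -- key downward induction
    have key : ∀ d m, m + d = L → 1 ≤ m → ∀ x : ℝ, 0 ≤ x → x ≤ F m →
        x * R0 + S ≥ x * ∑ α ∈ Finset.Icc 1 m, H α
          + ∑ α ∈ Finset.Icc (m + 1) L, min (F α) x * H α := by
      intro d
      induction d with
      | zero =>
        intro m hmL hm1 x hx0 hxF
        have hmeq : m = L := by omega
        subst hmeq
        rw [show Finset.Icc (m+1) m = ∅ from Finset.Icc_eq_empty (by omega)]
        simp only [Finset.sum_empty, add_zero]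
        have hm := hyp m hm1 (le_refl m)
        rw [show Finset.Icc (m+1) m = ∅ from Finset.Icc_eq_empty (by omega)] at hm
        simp only [Finset.sum_empty, add_zero] at hm
        set A := ∑ α ∈ Finset.Icc 1 m, H α
        rcases le_or_gt A R0 with hAR | hAR
        · nlinarith
        · nlinarith
      | succ d ih =>
        intro m hmL hm1 x hx0 hxF
        have hm1L : m + 1 ≤ L := by omega
        have ihm := ih (m+1) (by omega) (by omega)
        rcases le_or_gt x (F (m+1)) with hcase | hcase
        · have h3 := ihm x hx0 hcase
          have e1 : ∑ α ∈ Finset.Icc 1 (m+1), H α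
              = ∑ α ∈ Finset.Icc 1 m, H α + H (m+1) := by
            rw [Finset.sum_Icc_succ_top (by omega : 1 ≤ m + 1)]
          have e2 : ∑ α ∈ Finset.Icc (m+1) L, min (F α) x * H α
              = min (F (m+1)) x * H (m+1)
                + ∑ α ∈ Finset.Icc (m+2) L, min (F α) x * H α :=
            sum_Icc_peel _ hm1L
          rw [e2, min_eq_right hcase]
          rw [e1] at h3
          linarith
        · -- F (m+1) < x ≤ F m : linear interpolation between hyp m and hyp (m+1)
          have hmins : ∑ α ∈ Finset.Icc (m+1) L, min (F α) x * H α
              = ∑ α ∈ Finset.Icc (m+1) L, F α * H α := by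
            refine Finset.sum_congr rfl fun α hα => ?_
            obtain ⟨hα1, hα2⟩ := Finset.mem_Icc.mp hα
            have : F α ≤ F (m+1) := hFanti (m+1) α (by omega) hα1
            rw [min_eq_left (by linarith)]
          rw [hmins]
          set A := ∑ α ∈ Finset.Icc 1 m, H α with hA
          set B := ∑ α ∈ Finset.Icc (m+1) L, F α * H α with hB
          have hm := hyp m hm1 (by omega)
          have hm' := hyp (m+1) (by omega) hm1L
          -- rewrite hm' : F(m+1)*R0 + S ≥ F(m+1)*(A + H(m+1)) + (B - F(m+1)*H(m+1))
          have e1 : ∑ α ∈ Finset.Icc 1 (m+1), H α = A + H (m+1) := by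
            rw [hA, Finset.sum_Icc_succ_top (by omega : 1 ≤ m + 1)]
          have e2 : B = F (m+1) * H (m+1) + ∑ α ∈ Finset.Icc (m+2) L, F α * H α := by
            rw [hB]; exact sum_Icc_peel _ hm1L
          rw [e1] at hm'
          -- so F(m+1)*R0 + S ≥ F(m+1)*A + B
          have hm'' : F (m+1) * R0 + S ≥ F (m+1) * A + B := by nlinarith [hm', e2]
          rcases le_or_gt A R0 with hAR | hAR
          · nlinarith
          · nlinarith
    -- conclude
    rcases le_or_gt lam0 (F 1) with hcase | hcase
    · have h3 := key (L - 1) 1 (by omega) (le_refl 1) lam0 h0 hcase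
      have e2 : ∑ α ∈ Finset.Icc 1 L, min (F α) lam0 * H α
          = min (F 1) lam0 * H 1 + ∑ α ∈ Finset.Icc 2 L, min (F α) lam0 * H α := by
        have := sum_Icc_peel (fun α => min (F α) lam0 * H α) (show 0 + 1 ≤ L by omega)
        simpa using this
      rw [e2, min_eq_right hcase]
      simp only [Finset.Icc_self, Finset.sum_singleton] at h3
      linarith
    · have hmins : ∑ α ∈ Finset.Icc 1 L, min (F α) lam0 * H α
          = ∑ α ∈ Finset.Icc 1 L, F α * H α := by
        refine Finset.sum_congr rfl fun α hα => ?_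
        obtain ⟨hα1, _⟩ := Finset.mem_Icc.mp hα
        have : F α ≤ F 1 := hFanti 1 α (le_refl 1) hα1
        rw [min_eq_left (by linarith)]
      rw [hmins]
      have hm := hyp 1 (le_refl 1) hL
      simp only [Finset.Icc_self, Finset.sum_singleton] at hm
      have e2 : ∑ α ∈ Finset.Icc 1 L, F α * H α
          = F 1 * H 1 + ∑ α ∈ Finset.Icc 2 L, F α * H α := by
        have := sum_Icc_peel (fun α => F α * H α) (show 0 + 1 ≤ L by omega)
        simpa using this
      rw [e2]
      nlinarith
end
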